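/- arXiv:1801.09234 — 5 statements merged into one kernel-verified Lean document; each statement's English description precedes it below -/
import Mathlib

section
/- Let A be a σ-quasinormal subgroup of a finite group G, and suppose that G possesses a Hall σ_i-subgroup for some i ∈ I. Then A permutes with every Hall σ_i-subgroup H of G, that is, AH = HA. -/
open Subgroup Pointwise

/-- A finite group (or any type) is a `π`-group if every prime dividing its
cardinality belongs to `π`. -/
def IsPiGroup (π : Set ℕ) (X : Type*) : Prop :=
  ∀ p : ℕ, p.Prime → p ∣ Nat.card X → p ∈ π

/-- The complementary set of primes `π'`. -/
def primeCompl (π : Set ℕ) : Set ℕ := {p : ℕ | p.Prime ∧ p ∉ π}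

/-- `σ : I → Set ℕ` is a partition of the set of all primes: the `σ i` consist of
primes, and every prime belongs to exactly one `σ i` (so they are pairwise
disjoint and their union is the set of all primes). -/
def IsPrimePartition {I : Type*} (σ : I → Set ℕ) : Prop :=
  (∀ i, ∀ p ∈ σ i, p.Prime) ∧ ∀ p : ℕ, p.Prime → ∃! i, p ∈ σ i

/-- A group is `σ`-primary if it is a `σ i`-group for some `i`. -/
def IsSigmaPrimary {I : Type*} (σ : I → Set ℕ) (X : Type*) : Prop :=
  ∃ i, IsPiGroup (σ i) X

/-- `σ (n)`: the set of indices `i` such that `σ i` contains a prime dividing `n`. -/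
def sigmaOf {I : Type*} (σ : I → Set ℕ) (n : ℕ) : Set I :=
  {i | ∃ p : ℕ, p.Prime ∧ p ∈ σ i ∧ p ∣ n}

/-- `A` is a modular subgroup of `G` (a modular element of the subgroup lattice). -/
def IsModularSubgroup {G : Type*} [Group G] (A : Subgroup G) : Prop :=
  (∀ X Z : Subgroup G, X ≤ Z → X ⊔ (A ⊓ Z) = (X ⊔ A) ⊓ Z) ∧
  (∀ Y Z : Subgroup G, A ≤ Z → A ⊔ (Y ⊓ Z) = (A ⊔ Y) ⊓ Z)

/-- `A` is `σ`-subnormal in `G`: there is a chain `A = A₀ ≤ A₁ ≤ ⋯ ≤ Aₙ = G`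
such that each `A i` is normal in `A (i+1)` or `A (i+1) / (A i)_{A (i+1)}` is
`σ`-primary. -/
def IsSigmaSubnormal {I : Type*} (σ : I → Set ℕ) {G : Type*} [Group G]
    (A : Subgroup G) : Prop :=
  ∃ (n : ℕ) (c : Fin (n + 1) → Subgroup G),
    c 0 = A ∧ c (Fin.last n) = ⊤ ∧
    ∀ i : Fin n,
      c i.castSucc ≤ c i.succ ∧
        (((c i.castSucc).subgroupOf (c i.succ)).Normal ∨
          IsSigmaPrimary σ
            (c i.succ ⧸ ((c i.castSucc).subgroupOf (c i.succ)).normalCore))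

/-- `A` is `σ`-quasinormal in `G` if it is modular and `σ`-subnormal in `G`. -/
def IsSigmaQuasinormal {I : Type*} (σ : I → Set ℕ) {G : Type*} [Group G]
    (A : Subgroup G) : Prop :=
  IsModularSubgroup A ∧ IsSigmaSubnormal σ A

/-- `H` is a Hall `π`-subgroup of `G`: `|H|` is a `π`-number and `[G : H]` has no
prime divisors in `π`. -/
def IsHallPiSubgroup (π : Set ℕ) {G : Type*} [Group G] (H : Subgroup G) : Prop :=
  IsPiGroup π H ∧ ∀ p : ℕ, p.Prime → p ∣ H.index → p ∉ π

/-- Two subgroups permute if `AB = BA` as sets. -/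
def Permutes {G : Type*} [Group G] (A B : Subgroup G) : Prop :=
  (A : Set G) * (B : Set G) = (B : Set G) * (A : Set G)

/-- A group is `σ`-nilpotent if it is a direct product of `σ`-primary groups. -/
def IsSigmaNilpotent {I : Type*} (σ : I → Set ℕ) (X : Type*) [Group X] : Prop :=
  ∃ (n : ℕ) (H : Fin n → GrpCat.{0}),
    (∀ i, Finite (H i)) ∧ (∀ i, IsSigmaPrimary σ (H i)) ∧
      Nonempty (X ≃* ((i : Fin n) → H i))

/-- `C_G(H/K)`: the set of all `g ∈ G` such that `⁅h, g⁆ ∈ K` for all `h ∈ H`,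
realized as the preimage in `G` of the centralizer of the image of `H` in `G ⧸ K`. -/
def quotCentralizer {G : Type*} [Group G] (H K : Subgroup G) (hK : K.Normal) :
    Subgroup G :=
  haveI := hK
  Subgroup.comap (QuotientGroup.mk' K)
    (Subgroup.centralizer ((H.map (QuotientGroup.mk' K) : Subgroup (G ⧸ K)) : Set (G ⧸ K)))

/-- `H/K` is a chief factor of `G`: `K < H` are normal subgroups of `G` with no
normal subgroup of `G` strictly between them. -/
def IsChiefFactor {G : Type*} [Group G] (H K : Subgroup G) : Prop :=
  K.Normal ∧ H.Normal ∧ K < H ∧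
    ∀ L : Subgroup G, L.Normal → K ≤ L → L ≤ H → L = K ∨ L = H

/-- A factor `H/K` (with `K` normal in `G`) is `σ`-central in `G`:
there is an `i` such that both `H/K` and `G/C_G(H/K)` are `σ i`-groups
(equivalently, `(H/K) ⋊ (G/C_G(H/K))` is `σ`-primary). -/
def IsSigmaCentral {I : Type*} (σ : I → Set ℕ) {G : Type*} [Group G]
    (H K : Subgroup G) (hK : K.Normal) : Prop :=
  ∃ i, IsPiGroup (σ i) (H ⧸ K.subgroupOf H) ∧
    IsPiGroup (σ i) (G ⧸ quotCentralizer H K hK)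

/-- A normal subgroup `E` of `G` is `σ`-hypercentral in `G` if either `E = 1` or
every chief factor of `G` below `E` is `σ`-central in `G`. -/
def IsSigmaHypercentral {I : Type*} (σ : I → Set ℕ) {G : Type*} [Group G]
    (E : Subgroup G) : Prop :=
  E.Normal ∧ (E = ⊥ ∨
    ∀ H K : Subgroup G, (hc : IsChiefFactor H K) → H ≤ E →
      IsSigmaCentral σ H K hc.1)

/-- The `σ`-hypercentre `Z_σ(G)`: the product of all `σ`-hypercentral normal
subgroups of `G`. -/
def sigmaHypercentre {I : Type*} (σ : I → Set ℕ) (G : Type*) [Group G] : Subgroup G :=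
  sSup {E : Subgroup G | IsSigmaHypercentral σ E}

/-- `O_π(X)`: the largest normal `π`-subgroup of `X` (the product of all normal
`π`-subgroups). -/
def piCore (π : Set ℕ) (X : Type*) [Group X] : Subgroup X :=
  sSup {N : Subgroup X | N.Normal ∧ IsPiGroup π N}

/-- `O^π(X)`: the smallest normal subgroup of `X` whose quotient is a `π`-group. -/
def piResidual (π : Set ℕ) (X : Type*) [Group X] : Subgroup X :=
  sInf {N : Subgroup X | N.Normal ∧ IsPiGroup π (X ⧸ N)}

/-- A family of subgroups forms an internal direct product decomposition of `X`. -/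
def IsInternalDirectProduct {X : Type*} [Group X] {ι : Type*}
    (N : ι → Subgroup X) : Prop :=
  (∀ i, (N i).Normal) ∧ iSupIndep N ∧ iSup N = ⊤

/-- `X` is `π`-decomposable: `X = O_π(X) × O_{π'}(X)` (internal direct product). -/
def IsPiDecomposable (π : Set ℕ) (X : Type*) [Group X] : Prop :=
  (piCore π X).Normal ∧ (piCore (primeCompl π) X).Normal ∧
    Disjoint (piCore π X) (piCore (primeCompl π) X) ∧
      piCore π X ⊔ piCore (primeCompl π) X = ⊤

/-- `X` is `π`-special for a finite set of primes `π = {p₁, …, pₙ}`: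
`X = O_{p₁}(X) × ⋯ × O_{pₙ}(X) × O_{π'}(X)` (internal direct product). -/
def IsPiSpecial (π : Finset ℕ) (X : Type*) [Group X] : Prop :=
  IsInternalDirectProduct (fun o : Option {p : ℕ // p ∈ π} =>
    o.elim (piCore (primeCompl ↑π) X) (fun p => piCore {(p : ℕ)} X))

/-- The chain condition of Corollary 1.3: each factor is normal or the
corresponding quotient is a `π₀`-group for some `π₀ ∈ {π, π'}`. -/
def IsPiPiPrimeSubnormal (π : Set ℕ) {G : Type*} [Group G] (A : Subgroup G) : Prop :=
  ∃ (n : ℕ) (c : Fin (n + 1) → Subgroup G),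
    c 0 = A ∧ c (Fin.last n) = ⊤ ∧
    ∀ i : Fin n,
      c i.castSucc ≤ c i.succ ∧
        (((c i.castSucc).subgroupOf (c i.succ)).Normal ∨
          ∃ π₀ ∈ ({π, primeCompl π} : Set (Set ℕ)),
            IsPiGroup π₀
              (c i.succ ⧸ ((c i.castSucc).subgroupOf (c i.succ)).normalCore))

/-- The chain condition of Corollary 1.4: each factor is normal or the
corresponding quotient is a `π'`-group. -/
def IsPiPrimeSubnormal (π : Set ℕ) {G : Type*} [Group G] (A : Subgroup G) : Prop :=
  ∃ (n : ℕ) (c : Fin (n + 1) → Subgroup G),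
    c 0 = A ∧ c (Fin.last n) = ⊤ ∧
    ∀ i : Fin n,
      c i.castSucc ≤ c i.succ ∧
        (((c i.castSucc).subgroupOf (c i.succ)).Normal ∨
          IsPiGroup (primeCompl π)
            (c i.succ ⧸ ((c i.castSucc).subgroupOf (c i.succ)).normalCore))

/-- The centralizer of (the carrier of) a normal subgroup is normal. -/
theorem centralizer_normal_of_normal {G : Type*} [Group G] {N : Subgroup G}
    (hN : N.Normal) : (Subgroup.centralizer (N : Set G)).Normal := by
  constructor
  intro g hg c
  rw [Subgroup.mem_centralizer_iff] at hg ⊢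
  intro s hs
  have hs' : c⁻¹ * s * c ∈ (N : Set G) := hN.conj_mem' s hs c
  have h := hg _ hs'
  have : c * ((c⁻¹ * s * c) * g) * c⁻¹ = c * (g * (c⁻¹ * s * c)) * c⁻¹ := by rw [h]
  calc s * (c * g * c⁻¹) = c * ((c⁻¹ * s * c) * g) * c⁻¹ := by group
    _ = c * (g * (c⁻¹ * s * c)) * c⁻¹ := this
    _ = (c * g * c⁻¹) * s := by group

/-- `C_G(H/K)` is normal in `G` whenever `H` and `K` are. -/
theorem quotCentralizer_normal {G : Type*} [Group G] {H K : Subgroup G}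
    (hK : K.Normal) (hH : H.Normal) : (quotCentralizer H K hK).Normal := by
  haveI := hK
  exact (centralizer_normal_of_normal
    (hH.map (QuotientGroup.mk' K) (QuotientGroup.mk'_surjective K))).comap _

section SQHelpers

variable {G : Type*} [Group G]

lemma SQH_card_set_mul [Finite G] (X Y : Subgroup G) :
    Nat.card (↑X * ↑Y : Set G) * Nat.card (X ⊓ Y : Subgroup G) = Nat.card X * Nat.card Y := by
  classical
  set D : Subgroup X := (X ⊓ Y).subgroupOf X with hD
  have hmem : ∀ p : (X ⧸ D) × Y, ((Quotient.out p.1 : X) : G) * (p.2 : G) ∈ (↑X * ↑Y : Set G) :=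
    fun p => Set.mul_mem_mul (Quotient.out p.1).2 p.2.2
  have hbij : Function.Bijective (fun p : (X ⧸ D) × Y =>
      (⟨_, hmem p⟩ : (↑X * ↑Y : Set G))) := by
    constructor
    · rintro ⟨q, y⟩ ⟨q', y'⟩ h
      have h' : ((Quotient.out q : X) : G) * y = ((Quotient.out q' : X) : G) * y' :=
        congrArg Subtype.val h
      have hxy : ((Quotient.out q : X) : G)⁻¹ * ((Quotient.out q' : X) : G) = y * y'⁻¹ := by
        calc ((Quotient.out q : X) : G)⁻¹ * ((Quotient.out q' : X) : G)
            = ((Quotient.out q : X) : G)⁻¹ * ((((Quotient.out q' : X) : G) * y') * (y' : G)⁻¹) := by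
              group
          _ = ((Quotient.out q : X) : G)⁻¹ * ((((Quotient.out q : X) : G) * y) * (y' : G)⁻¹) := by
              rw [h']
          _ = (y : G) * (y' : G)⁻¹ := by group
      have hd : ((Quotient.out q)⁻¹ * Quotient.out q' : X) ∈ D := by
        refine Subgroup.mem_subgroupOf.mpr (Subgroup.mem_inf.mpr ⟨?_, ?_⟩)
        · exact mul_mem (inv_mem (Quotient.out q).2) (Quotient.out q').2
        · push_cast
          rw [hxy]; exact mul_mem y.2 (inv_mem y'.2)
      have hq : q = q' := by
        rw [← QuotientGroup.out_eq' q, ← QuotientGroup.out_eq' q']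
        exact (QuotientGroup.eq).mpr hd
      subst hq
      have hy : (y : G) = y' := mul_left_cancel h'
      exact Prod.ext rfl (Subtype.ext hy)
    · rintro ⟨w, hw⟩
      obtain ⟨x, hx, y, hy, rfl⟩ := Set.mem_mul.mp hw
      set q : X ⧸ D := QuotientGroup.mk ⟨x, hx⟩ with hq
      have hd : ((Quotient.out q)⁻¹ * ⟨x, hx⟩ : X) ∈ D := by
        have h5 : ((Quotient.out q : X) : X ⧸ D) = ((⟨x, hx⟩ : X) : X ⧸ D) := by
          rw [QuotientGroup.out_eq' q]
        exact (QuotientGroup.eq).mp h5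
      have hd2 := Subgroup.mem_inf.mp (Subgroup.mem_subgroupOf.mp hd)
      refine ⟨⟨q, ⟨(((Quotient.out q)⁻¹ * ⟨x, hx⟩ : X) : G) * y, mul_mem hd2.2 hy⟩⟩, ?_⟩
      apply Subtype.ext
      show ((Quotient.out q : X) : G) * _ = x * y
      push_cast
      group
  have hcard : Nat.card (X ⧸ D) * Nat.card Y = Nat.card (↑X * ↑Y : Set G) := by
    rw [← Nat.card_prod]
    exact Nat.card_eq_of_bijective _ hbij
  have h1 : D.index * Nat.card D = Nat.card X := Subgroup.index_mul_card D
  have h2 : Nat.card D = Nat.card (X ⊓ Y : Subgroup G) :=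
    Nat.card_congr (Subgroup.subgroupOfEquivOfLe inf_le_left).toEquiv
  have h3 : Nat.card (X ⧸ D) = D.index := (Subgroup.index_eq_card D).symm
  calc Nat.card (↑X * ↑Y : Set G) * Nat.card (X ⊓ Y : Subgroup G)
      = (Nat.card (X ⧸ D) * Nat.card Y) * Nat.card D := by rw [hcard, h2]
    _ = (D.index * Nat.card D) * Nat.card Y := by rw [h3]; ring
    _ = Nat.card X * Nat.card Y := by rw [h1]

lemma SQH_mul_subset_sup (A H : Subgroup G) : (↑A * ↑H : Set G) ⊆ ↑(A ⊔ H) :=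
  Set.mul_subset_iff.mpr fun _ ha _ hh =>
    mul_mem (Subgroup.mem_sup_left ha) (Subgroup.mem_sup_right hh)

lemma SQH_mul_eq_sup_of_card [Finite G] {A H : Subgroup G}
    (hc : Nat.card (↑A * ↑H : Set G) = Nat.card (A ⊔ H : Subgroup G)) :
    (↑A * ↑H : Set G) = ↑(A ⊔ H) := by
  apply Set.eq_of_subset_of_ncard_le (SQH_mul_subset_sup A H) ?_ (Set.toFinite _)
  rw [← Nat.card_coe_set_eq, ← Nat.card_coe_set_eq, hc]
  exact le_of_eq (by rfl)

lemma SQH_permutes_of_mul_eq {A H W : Subgroup G}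
    (h : (↑A * ↑H : Set G) = ↑W) : Permutes A H := by
  have h2 : (↑H * ↑A : Set G) = ↑W := by
    have h3 := congrArg (fun s : Set G => s⁻¹) h
    simp only [mul_inv_rev, inv_coe_set] at h3
    exact h3
  rw [Permutes, h, h2]

lemma SQH_normal_of_subgroupOf_top {M : Subgroup G}
    (h : (M.subgroupOf (⊤ : Subgroup G)).Normal) : M.Normal := by
  constructor
  intro m hm g
  have := h.conj_mem ⟨m, trivial⟩ (Subgroup.mem_subgroupOf.mpr hm) ⟨g, trivial⟩
  exact Subgroup.mem_subgroupOf.mp this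

lemma SQH_card_lt_of_ne_top [Finite G] {M : Subgroup G} (h : M ≠ ⊤) :
    Nat.card M < Nat.card G :=
  lt_of_le_of_ne (Nat.le_of_dvd Nat.card_pos (Subgroup.card_subgroup_dvd_card M))
    (fun he => h (Subgroup.eq_top_of_card_eq M he))

lemma SQH_modular_subgroupOf {A Z : Subgroup G}
    (hA : IsModularSubgroup A) (hAZ : A ≤ Z) : IsModularSubgroup (A.subgroupOf Z) := by
  have hinj : Function.Injective Z.subtype := Z.subtype_injective
  constructor
  · intro X' Z' hXZ'
    apply Subgroup.map_injective hinj
    simp only [Subgroup.map_sup, Subgroup.map_inf _ _ _ hinj, Subgroup.subgroupOf_map_subtype,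
      inf_of_le_left hAZ]
    exact hA.1 _ _ (Subgroup.map_mono hXZ')
  · intro Y' Z' hAZ'
    apply Subgroup.map_injective hinj
    simp only [Subgroup.map_sup, Subgroup.map_inf _ _ _ hinj, Subgroup.subgroupOf_map_subtype,
      inf_of_le_left hAZ]
    apply hA.2
    have := Subgroup.map_mono (f := Z.subtype) hAZ'
    rwa [Subgroup.subgroupOf_map_subtype, inf_of_le_left hAZ] at this

lemma SQH_hall_inter {π : Set ℕ} [Finite G] {H Z : Subgroup G}
    (hH : IsHallPiSubgroup π H) (hdvd : Nat.card (↑H * ↑Z : Set G) ∣ Nat.card G) :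
    IsHallPiSubgroup π ((H ⊓ Z).subgroupOf Z) := by
  have hcZ : Nat.card ((H ⊓ Z).subgroupOf Z) = Nat.card (H ⊓ Z : Subgroup G) :=
    Nat.card_congr (Subgroup.subgroupOfEquivOfLe inf_le_right).toEquiv
  constructor
  · intro p hp hpd
    apply hH.1 p hp
    rw [hcZ] at hpd
    exact hpd.trans (Subgroup.card_dvd_of_le inf_le_left)
  · intro p hp hpd
    apply hH.2 p hp
    have hr : ((H ⊓ Z).subgroupOf Z).index * Nat.card (H ⊓ Z : Subgroup G) = Nat.card Z := by
      rw [← hcZ]; exact Subgroup.index_mul_card _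
    have hmain : Nat.card (↑H * ↑Z : Set G) = Nat.card H * ((H ⊓ Z).subgroupOf Z).index := by
      have h0 : 0 < Nat.card (H ⊓ Z : Subgroup G) := Nat.card_pos
      have hps := SQH_card_set_mul H Z
      rw [← hr] at hps
      apply Nat.eq_of_mul_eq_mul_right h0
      rw [hps]; ring
    have hdvd2 : Nat.card H * ((H ⊓ Z).subgroupOf Z).index ∣ Nat.card H * H.index := by
      rw [← hmain, Subgroup.card_mul_index]; exact hdvd
    have h0 : 0 < Nat.card H := Nat.card_pos
    exact hpd.trans ((Nat.mul_dvd_mul_iff_left h0).mp hdvd2)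

lemma SQH_sigmaSubnormal_subgroupOf {I : Type*} {σ : I → Set ℕ}
    {A Z : Subgroup G} (h : IsSigmaSubnormal σ A) (hAZ : A ≤ Z) :
    IsSigmaSubnormal σ (A.subgroupOf Z) := by
  obtain ⟨n, c, hc0, hcl, hstep⟩ := h
  refine ⟨n, fun k => (c k ⊓ Z).subgroupOf Z, ?_, ?_, ?_⟩
  · show (c 0 ⊓ Z).subgroupOf Z = _
    rw [hc0, inf_of_le_left hAZ]
  · show (c (Fin.last n) ⊓ Z).subgroupOf Z = _
    rw [hcl, top_inf_eq, Subgroup.subgroupOf_self]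
  · intro k
    obtain ⟨hle, hor⟩ := hstep k
    have hlek : ((c k.castSucc ⊓ Z).subgroupOf Z) ≤ ((c k.succ ⊓ Z).subgroupOf Z) :=
      fun x hx => Subgroup.mem_subgroupOf.mpr
        (inf_le_inf_right Z hle (Subgroup.mem_subgroupOf.mp hx))
    refine ⟨hlek, ?_⟩
    set X := c k.castSucc with hX
    set Y := c k.succ with hY
    set P : Subgroup Z := (X ⊓ Z).subgroupOf Z with hP
    set Q : Subgroup Z := (Y ⊓ Z).subgroupOf Z with hQ
    rcases hor with hN | hp
    · left
      constructor
      rintro x hx g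
      refine Subgroup.mem_subgroupOf.mpr (Subgroup.mem_subgroupOf.mpr
        (Subgroup.mem_inf.mpr ⟨?_, ?_⟩))
      · have hxX : ((x : Z) : G) ∈ X :=
          (Subgroup.mem_inf.mp (Subgroup.mem_subgroupOf.mp (Subgroup.mem_subgroupOf.mp hx))).1
        have hxY : ((x : Z) : G) ∈ Y := hle hxX
        have hgYZ : ((g : Z) : G) ∈ Y ⊓ Z := Subgroup.mem_subgroupOf.mp g.2
        have key := hN.conj_mem ⟨((x : Z) : G), hxY⟩ (Subgroup.mem_subgroupOf.mpr hxX)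
          ⟨((g : Z) : G), hgYZ.1⟩
        exact Subgroup.mem_subgroupOf.mp key
      · exact (((g * x * g⁻¹ : Q) : Z)).2
    · right
      set K : Subgroup Y := (X.subgroupOf Y).normalCore with hK
      set C : Subgroup Q := ((P.subgroupOf Q).normalCore) with hC
      have hmemY : ∀ q : Q, ((q : Z) : G) ∈ Y := fun q => (Subgroup.mem_subgroupOf.mp q.2).1
      set ι : Q →* Y :=
        { toFun := fun q => ⟨((q : Z) : G), hmemY q⟩
          map_one' := rfl
          map_mul' := fun a b => rfl } with hι
      set ψ : Q →* (Y ⧸ K) := (QuotientGroup.mk' K).comp ι with hψ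
      have hker : ψ.ker ≤ C := by
        intro q hq
        have hqK : ι q ∈ K := by
          have h6 := hq
          rwa [hψ, MonoidHom.mem_ker, MonoidHom.comp_apply, ← MonoidHom.mem_ker,
            QuotientGroup.ker_mk'] at h6
        have hall : ∀ b : Q, b * q * b⁻¹ ∈ P.subgroupOf Q := by
          intro b
          refine Subgroup.mem_subgroupOf.mpr (Subgroup.mem_subgroupOf.mpr
            (Subgroup.mem_inf.mpr ⟨?_, ?_⟩))
          · have h7 := hqK ⟨((b : Z) : G), hmemY b⟩
            exact Subgroup.mem_subgroupOf.mp h7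
          · exact (((b * q * b⁻¹ : Q) : Z)).2
        exact hall
      have hdvd : Nat.card (Q ⧸ C) ∣ Nat.card (Y ⧸ K) := by
        have h1 : C.index ∣ ψ.ker.index := Subgroup.index_dvd_of_le hker
        have h2 : ψ.ker.index = Nat.card ψ.range := Subgroup.index_ker ψ
        have h3 : Nat.card ψ.range ∣ Nat.card (Y ⧸ K) := Subgroup.card_subgroup_dvd_card _
        rw [← Subgroup.index_eq_card]
        exact dvd_trans (h2 ▸ h1) h3
      obtain ⟨j, hj⟩ := hp
      exact ⟨j, fun p pp pd => hj p pp (pd.trans hdvd)⟩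

lemma SQH_chain_extract {I : Type*} (σ : I → Set ℕ) : ∀ (n : ℕ) {G : Type*} [Group G]
    (A : Subgroup G) (c : Fin (n+1) → Subgroup G), c 0 = A → c (Fin.last n) = ⊤ →
    (∀ i : Fin n, c i.castSucc ≤ c i.succ ∧
      (((c i.castSucc).subgroupOf (c i.succ)).Normal ∨
        IsSigmaPrimary σ (c i.succ ⧸ ((c i.castSucc).subgroupOf (c i.succ)).normalCore))) →
    A = ⊤ ∨ ∃ M : Subgroup G, A ≤ M ∧ M ≠ ⊤ ∧
      ((M.subgroupOf (⊤ : Subgroup G)).Normal ∨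
        IsSigmaPrimary σ ((⊤ : Subgroup G) ⧸ (M.subgroupOf (⊤ : Subgroup G)).normalCore)) := by
  intro n
  induction n with
  | zero =>
    intro G _ A c h0 hl _
    left
    rw [← h0, ← hl]
    rfl
  | succ n ih =>
    intro G _ A c h0 hl hstep
    have hmono : ∀ k : Fin (n+2), c 0 ≤ c k := by
      intro k
      induction k using Fin.induction with
      | zero => exact le_rfl
      | succ i ihi => exact ihi.trans (hstep i).1
    set M : Subgroup G := c (Fin.last n).castSucc with hM
    by_cases hMtop : M = ⊤
    · refine ih A (c ∘ Fin.castSucc) ?_ ?_ ?_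
      · simpa using h0
      · simpa using hMtop
      · intro i
        have h := hstep i.castSucc
        have hidx : (i.castSucc).succ = (i.succ).castSucc := Fin.succ_castSucc i
        rw [hidx] at h
        simpa [Function.comp] using h
    · right
      refine ⟨M, h0 ▸ hmono _, hMtop, ?_⟩
      have h := (hstep (Fin.last n)).2
      have hidx : (Fin.last n).succ = Fin.last (n+1) := Fin.succ_last n
      rw [hidx, hl] at h
      exact h

lemma SQH_push_mul_eq {A K Z : Subgroup G} (hAZ : A ≤ Z) (hKZ : K ≤ Z)
    (h : (↑(A.subgroupOf Z) * ↑(K.subgroupOf Z) : Set Z) =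
      ↑(A.subgroupOf Z ⊔ K.subgroupOf Z)) :
    (↑A * ↑K : Set G) = ↑(A ⊔ K) := by
  have himg := congrArg (fun s : Set Z => Z.subtype '' s) h
  simp only [Set.image_mul, ← Subgroup.coe_map, Subgroup.map_sup,
    Subgroup.subgroupOf_map_subtype, inf_of_le_left hAZ, inf_of_le_left hKZ] at himg
  exact himg

end SQHelpers


lemma SQH_main {I : Type*} (σ : I → Set ℕ) (hσ : IsPrimePartition σ) :
    ∀ (n : ℕ) {G : Type*} [Group G] [Finite G], Nat.card G ≤ n →
    ∀ (A : Subgroup G), IsModularSubgroup A → IsSigmaSubnormal σ A →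
    ∀ (i : I) (H : Subgroup G), IsHallPiSubgroup (σ i) H →
    (↑A * ↑H : Set G) = ↑(A ⊔ H) := by
  intro n
  induction n with
  | zero =>
    intro G _ _ hle
    exact absurd (Nat.card_pos.trans_le hle) (by simp)
  | succ n ih =>
    intro G _ _ hcard A hmod hsub i H hHall
    obtain ⟨m, c, h0, hl, hstep⟩ := id hsub
    rcases SQH_chain_extract σ m A c h0 hl hstep with htop | ⟨M, hAM, hMne, hor⟩
    · subst htop
      rw [top_sup_eq]
      ext x
      simp only [Subgroup.coe_top, Set.mem_univ, iff_true]
      exact Set.mem_mul.mpr ⟨x, Set.mem_univ x, 1, H.one_mem, mul_one x⟩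
    · have hcM : Nat.card M ≤ n :=
        Nat.lt_succ_iff.mp (lt_of_lt_of_le (SQH_card_lt_of_ne_top hMne) hcard)
      have hmodM : IsModularSubgroup (A.subgroupOf M) := SQH_modular_subgroupOf hmod hAM
      have hsubM : IsSigmaSubnormal σ (A.subgroupOf M) :=
        SQH_sigmaSubnormal_subgroupOf hsub hAM
      rcases hor with hnorm | hp
      · -- Case 1 : M normal in G
        haveI hMn : M.Normal := SQH_normal_of_subgroupOf_top hnorm
        have hHMdvd : Nat.card (↑H * ↑M : Set G) ∣ Nat.card G := by
          rw [← Subgroup.mul_normal H M]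
          exact Subgroup.card_subgroup_dvd_card _
        have hIH := ih hcM (A.subgroupOf M) hmodM hsubM i ((H ⊓ M).subgroupOf M)
          (SQH_hall_inter hHall hHMdvd)
        have hpush : (↑A * ↑(H ⊓ M) : Set G) = ↑(A ⊔ (H ⊓ M)) :=
          SQH_push_mul_eq hAM inf_le_right hIH
        have hBmod : A ⊔ (H ⊓ M) = (A ⊔ H) ⊓ M := hmod.2 H M hAM
        have hACap : A ⊓ (H ⊓ M) = A ⊓ H := by
          rw [← inf_assoc]
          exact inf_of_le_left (le_trans inf_le_left hAM)
        have e2 : Nat.card ((A ⊔ H) ⊓ M : Subgroup G) * Nat.card (A ⊓ H : Subgroup G)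
            = Nat.card A * Nat.card (H ⊓ M : Subgroup G) := by
          have hps := SQH_card_set_mul A (H ⊓ M)
          rw [hACap] at hps
          rw [← hps]
          congr 1
          rw [hpush, hBmod]
          rfl
        have hsupAssoc : (A ⊔ H) ⊔ M = H ⊔ M := by
          rw [sup_assoc]
          exact sup_eq_right.mpr (hAM.trans le_sup_right)
        have e3 : Nat.card (H ⊔ M : Subgroup G) * Nat.card ((A ⊔ H) ⊓ M : Subgroup G)
            = Nat.card (A ⊔ H : Subgroup G) * Nat.card M := by
          have hps := SQH_card_set_mul (A ⊔ H) M
          rw [← Subgroup.mul_normal (A ⊔ H) M, hsupAssoc] at hps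
          exact hps
        have e5 : Nat.card (H ⊔ M : Subgroup G) * Nat.card (H ⊓ M : Subgroup G)
            = Nat.card H * Nat.card M := by
          have hps := SQH_card_set_mul H M
          rw [← Subgroup.mul_normal H M] at hps
          exact hps
        have hMpos : 0 < Nat.card M := Nat.card_pos
        have hAHpos : 0 < Nat.card (A ⊓ H : Subgroup G) := Nat.card_pos
        have key : Nat.card (A ⊔ H : Subgroup G) * Nat.card (A ⊓ H : Subgroup G)
            = Nat.card A * Nat.card H := by
          apply Nat.eq_of_mul_eq_mul_right hMpos
          calc (Nat.card (A ⊔ H : Subgroup G) * Nat.card (A ⊓ H : Subgroup G)) * Nat.card M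
              = (Nat.card (A ⊔ H : Subgroup G) * Nat.card M)
                  * Nat.card (A ⊓ H : Subgroup G) := by ring
            _ = (Nat.card (H ⊔ M : Subgroup G) * Nat.card ((A ⊔ H) ⊓ M : Subgroup G))
                  * Nat.card (A ⊓ H : Subgroup G) := by rw [e3]
            _ = Nat.card (H ⊔ M : Subgroup G)
                  * (Nat.card ((A ⊔ H) ⊓ M : Subgroup G) * Nat.card (A ⊓ H : Subgroup G)) := by
                ring
            _ = Nat.card (H ⊔ M : Subgroup G)
                  * (Nat.card A * Nat.card (H ⊓ M : Subgroup G)) := by rw [e2]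
            _ = (Nat.card (H ⊔ M : Subgroup G) * Nat.card (H ⊓ M : Subgroup G))
                  * Nat.card A := by ring
            _ = (Nat.card H * Nat.card M) * Nat.card A := by rw [e5]
            _ = (Nat.card A * Nat.card H) * Nat.card M := by ring
        have hfin : Nat.card (↑A * ↑H : Set G) = Nat.card (A ⊔ H : Subgroup G) := by
          apply Nat.eq_of_mul_eq_mul_right hAHpos
          rw [SQH_card_set_mul A H, key]
        exact SQH_mul_eq_sup_of_card hfin
      · -- Case 2 : top quotient is σ-primary
        obtain ⟨j, hj⟩ := hp
        set ιT : G →* (⊤ : Subgroup G) :=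
          { toFun := fun g => ⟨g, Subgroup.mem_top g⟩
            map_one' := rfl
            map_mul' := fun _ _ => rfl } with hιT
        set φ : G →* ((⊤ : Subgroup G) ⧸ (M.subgroupOf (⊤ : Subgroup G)).normalCore) :=
          (QuotientGroup.mk' _).comp ιT with hφ
        set N : Subgroup G := φ.ker with hN
        haveI hNnormal : N.Normal := MonoidHom.normal_ker φ
        have hNM : N ≤ M := by
          intro g hg
          have h1 : QuotientGroup.mk' ((M.subgroupOf (⊤ : Subgroup G)).normalCore) (ιT g) = 1 :=
            hg
          rw [← MonoidHom.mem_ker, QuotientGroup.ker_mk'] at h1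
          exact Subgroup.mem_subgroupOf.mp (Subgroup.normalCore_le _ h1)
        have hNidx : ∀ p : ℕ, p.Prime → p ∣ N.index → p ∈ σ j := by
          intro p pp pd
          apply hj p pp
          have h1 : N.index = Nat.card φ.range := Subgroup.index_ker φ
          exact (h1 ▸ pd).trans (Subgroup.card_subgroup_dvd_card _)
        by_cases hij : j = i
        · subst hij
          have hsupHN : H ⊔ N = ⊤ := by
            rw [← Subgroup.index_eq_one]
            by_contra hne1
            obtain ⟨p, pp, pd⟩ := Nat.exists_prime_and_dvd hne1
            exact hHall.2 p pp (pd.trans (Subgroup.index_dvd_of_le le_sup_left))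
              (hNidx p pp (pd.trans (Subgroup.index_dvd_of_le le_sup_right)))
          have hHNuniv : (↑H * ↑N : Set G) = Set.univ := by
            rw [← Subgroup.mul_normal H N, hsupHN, Subgroup.coe_top]
          set Z : Subgroup G := A ⊔ N with hZ
          have hAZ : A ≤ Z := le_sup_left
          have hZM : Z ≤ M := sup_le hAM hNM
          have hZne : Z ≠ ⊤ := fun h => hMne (top_le_iff.mp (h ▸ hZM))
          have hcZ : Nat.card Z ≤ n :=
            Nat.lt_succ_iff.mp (lt_of_lt_of_le (SQH_card_lt_of_ne_top hZne) hcard)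
          have hHZuniv : (↑H * ↑Z : Set G) = Set.univ := by
            apply Set.eq_univ_of_univ_subset
            rw [← hHNuniv]
            exact Set.mul_subset_mul_left (SetLike.coe_subset_coe.mpr le_sup_right)
          have huc : Nat.card (Set.univ : Set G) = Nat.card G :=
            Nat.card_congr (Equiv.Set.univ G)
          have hHZdvd : Nat.card (↑H * ↑Z : Set G) ∣ Nat.card G := by
            rw [hHZuniv, huc]
          have hIH := ih hcZ (A.subgroupOf Z) (SQH_modular_subgroupOf hmod hAZ)
            (SQH_sigmaSubnormal_subgroupOf hsub hAZ) j ((H ⊓ Z).subgroupOf Z)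
            (SQH_hall_inter hHall hHZdvd)
          have hpush : (↑A * ↑(H ⊓ Z) : Set G) = ↑(A ⊔ (H ⊓ Z)) :=
            SQH_push_mul_eq hAZ inf_le_right hIH
          have hBmod : A ⊔ (H ⊓ Z) = (A ⊔ H) ⊓ Z := hmod.2 H Z hAZ
          have hACap : A ⊓ (H ⊓ Z) = A ⊓ H := by
            rw [← inf_assoc]
            exact inf_of_le_left (le_trans inf_le_left hAZ)
          have eA : Nat.card ((A ⊔ H) ⊓ Z : Subgroup G) * Nat.card (A ⊓ H : Subgroup G)
              = Nat.card A * Nat.card (H ⊓ Z : Subgroup G) := by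
            have hps := SQH_card_set_mul A (H ⊓ Z)
            rw [hACap] at hps
            rw [← hps]
            congr 1
            rw [hpush, hBmod]
            rfl
          have hTZuniv : (↑(A ⊔ H) * ↑Z : Set G) = Set.univ := by
            apply Set.eq_univ_of_univ_subset
            rw [← hHNuniv]
            exact Set.mul_subset_mul (SetLike.coe_subset_coe.mpr le_sup_right)
              (SetLike.coe_subset_coe.mpr le_sup_right)
          have eT : Nat.card G * Nat.card ((A ⊔ H) ⊓ Z : Subgroup G)
              = Nat.card (A ⊔ H : Subgroup G) * Nat.card Z := by
            have hps := SQH_card_set_mul (A ⊔ H) Z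
            rw [hTZuniv, huc] at hps
            exact hps
          have eH : Nat.card G * Nat.card (H ⊓ Z : Subgroup G)
              = Nat.card H * Nat.card Z := by
            have hps := SQH_card_set_mul H Z
            rw [hHZuniv, huc] at hps
            exact hps
          have hZpos : 0 < Nat.card Z := Nat.card_pos
          have hAHpos : 0 < Nat.card (A ⊓ H : Subgroup G) := Nat.card_pos
          have key : Nat.card (A ⊔ H : Subgroup G) * Nat.card (A ⊓ H : Subgroup G)
              = Nat.card A * Nat.card H := by
            apply Nat.eq_of_mul_eq_mul_right hZpos
            calc (Nat.card (A ⊔ H : Subgroup G) * Nat.card (A ⊓ H : Subgroup G)) * Nat.card Z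
                = (Nat.card (A ⊔ H : Subgroup G) * Nat.card Z)
                    * Nat.card (A ⊓ H : Subgroup G) := by ring
              _ = (Nat.card G * Nat.card ((A ⊔ H) ⊓ Z : Subgroup G))
                    * Nat.card (A ⊓ H : Subgroup G) := by rw [eT]
              _ = Nat.card G
                    * (Nat.card ((A ⊔ H) ⊓ Z : Subgroup G) * Nat.card (A ⊓ H : Subgroup G)) := by
                  ring
              _ = Nat.card G * (Nat.card A * Nat.card (H ⊓ Z : Subgroup G)) := by rw [eA]
              _ = Nat.card A * (Nat.card G * Nat.card (H ⊓ Z : Subgroup G)) := by ring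
              _ = Nat.card A * (Nat.card H * Nat.card Z) := by rw [eH]
              _ = (Nat.card A * Nat.card H) * Nat.card Z := by ring
          have hfin : Nat.card (↑A * ↑H : Set G) = Nat.card (A ⊔ H : Subgroup G) := by
            apply Nat.eq_of_mul_eq_mul_right hAHpos
            rw [SQH_card_set_mul A H, key]
          exact SQH_mul_eq_sup_of_card hfin
        · -- j ≠ i : H is contained in N ≤ M
          have hHN : H ≤ N := by
            intro h hh
            show φ h = 1
            by_contra hne1
            have hord : orderOf (φ h) ≠ 1 := fun h1 => hne1 (orderOf_eq_one_iff.mp h1)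
            obtain ⟨p, pp, pd⟩ := Nat.exists_prime_and_dvd hord
            have hp1 : p ∈ σ j := hj p pp (pd.trans (orderOf_dvd_natCard _))
            have hp2 : p ∈ σ i := hHall.1 p pp
              (pd.trans ((orderOf_map_dvd φ h).trans (Subgroup.orderOf_dvd_natCard H hh)))
            obtain ⟨k, -, huniq⟩ := hσ.2 p pp
            exact hij ((huniq j hp1).trans (huniq i hp2).symm)
          have hHM : H ≤ M := hHN.trans hNM
          have hHMset : (↑H * ↑M : Set G) = (↑M : Set G) := by
            apply subset_antisymm
            · exact Set.mul_subset_iff.mpr fun a ha b hb => M.mul_mem (hHM ha) hb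
            · intro x hx
              exact Set.mem_mul.mpr ⟨1, H.one_mem, x, hx, one_mul x⟩
          have hHMdvd : Nat.card (↑H * ↑M : Set G) ∣ Nat.card G := by
            rw [hHMset]
            exact Subgroup.card_subgroup_dvd_card M
          have hIH := ih hcM (A.subgroupOf M) hmodM hsubM i ((H ⊓ M).subgroupOf M)
            (SQH_hall_inter hHall hHMdvd)
          have hpush := SQH_push_mul_eq hAM inf_le_right hIH
          rw [inf_of_le_left hHM] at hpush
          exact hpush

/-- A `σ`-quasinormal subgroup permutes with every Hall
`σ i`-subgroup, provided `G` possesses one. -/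
theorem sigmaQuasinormal_permutes_hall {I : Type*} (σ : I → Set ℕ)
    (hσ : IsPrimePartition σ) {G : Type*} [Group G] [Finite G] (A : Subgroup G)
    (hA : IsSigmaQuasinormal σ A) (i : I)
    (hex : ∃ H : Subgroup G, IsHallPiSubgroup (σ i) H) :
    ∀ H : Subgroup G, IsHallPiSubgroup (σ i) H → Permutes A H := by
  intro H hH
  exact SQH_permutes_of_mul_eq (SQH_main σ hσ (Nat.card G) le_rfl A hA.1 hA.2 i H hH)
end

section
/- Let A be a σ-quasinormal subgroup of a finite group G. Then A is σ-seminormal in G; that is, every element x ∈ G with σ(|x|) ∩ σ(A) = ∅ normalizes A. -/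
open Subgroup Pointwise

namespace SQNAux

variable {I : Type*} {σ : I → Set ℕ}

lemma sigmaOf_mono {m n : ℕ} (h : m ∣ n) : sigmaOf σ m ⊆ sigmaOf σ n :=
  fun _ ⟨p, hp, hpi, hpd⟩ => ⟨p, hp, hpi, hpd.trans h⟩

variable {G : Type*} [Group G]

lemma orderOf_coe_subgroup {E : Subgroup G} (a : ↥E) : orderOf (a : G) = orderOf a :=
  orderOf_injective E.subtype E.subtype_injective a

lemma orderOf_dvd_card_of_mem {E : Subgroup G} {a : G} (ha : a ∈ E) :
    orderOf a ∣ Nat.card E := by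
  have h2 : orderOf a = orderOf (⟨a, ha⟩ : E) := orderOf_coe_subgroup (⟨a, ha⟩ : E)
  rw [h2]
  exact orderOf_dvd_natCard _

lemma card_subgroupOf_eq {A E : Subgroup G} (h : A ≤ E) :
    Nat.card (A.subgroupOf E) = Nat.card A :=
  Nat.card_congr (Subgroup.subgroupOfEquivOfLe h).toEquiv

/-- Conjugate subgroup `g N g⁻¹`. -/
def conjA (g : G) (N : Subgroup G) : Subgroup G := N.map (MulAut.conj g).toMonoidHom

lemma mem_conjA {g a : G} {N : Subgroup G} : a ∈ conjA g N ↔ g⁻¹ * a * g ∈ N := by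
  constructor
  · rintro ⟨b, hb, rfl⟩
    simpa [MulAut.conj_apply, mul_assoc] using hb
  · intro h
    refine ⟨g⁻¹ * a * g, h, ?_⟩
    simp [MulAut.conj_apply, mul_assoc]

lemma conjA_conjA (g h : G) (N : Subgroup G) : conjA g (conjA h N) = conjA (g * h) N := by
  ext a; simp only [mem_conjA, mul_inv_rev, mul_assoc]

lemma conjA_one (N : Subgroup G) : conjA 1 N = N := by
  ext a; simp [mem_conjA]

lemma conjA_card (g : G) (N : Subgroup G) : Nat.card (conjA g N) = Nat.card N :=
  (Nat.card_congr (Subgroup.equivMapOfInjective N _ (MulAut.conj g).injective).toEquiv).symm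

lemma conjA_mono {g : G} {N M : Subgroup G} (h : N ≤ M) : conjA g N ≤ conjA g M :=
  Subgroup.map_mono h

lemma conjA_sup (g : G) (N M : Subgroup G) : conjA g (N ⊔ M) = conjA g N ⊔ conjA g M :=
  Subgroup.map_sup _ _ _

lemma conjA_bot (g : G) : conjA g (⊥ : Subgroup G) = ⊥ := by
  ext a
  rw [mem_conjA, Subgroup.mem_bot, Subgroup.mem_bot]
  constructor
  · intro h
    have := congrArg (fun z => g * z * g⁻¹) h
    simpa [mul_assoc] using this
  · rintro rfl; simp

lemma conjA_sSup (g : G) (S : Set (Subgroup G)) : conjA g (sSup S) = sSup (conjA g '' S) := by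
  show Subgroup.map _ (sSup S) = _
  rw [sSup_image]
  exact (Subgroup.gc_map_comap _).l_sSup

lemma conjA_eq_of_mem_normalizer {g : G} {N : Subgroup G} (h : g ∈ (Subgroup.normalizer (N : Set G))) :
    conjA g N = N := by
  rw [Subgroup.mem_normalizer_iff] at h
  ext a
  rw [mem_conjA]
  constructor
  · intro ha
    have := (h (g⁻¹ * a * g)).mp ha
    simpa [mul_assoc] using this
  · intro ha
    exact (h (g⁻¹ * a * g)).mpr (by simpa [mul_assoc] using ha)

lemma mem_normalizer_of_conjA {g : G} {N : Subgroup G} (h : conjA g N = N) :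
    g ∈ (Subgroup.normalizer (N : Set G)) := by
  rw [Subgroup.mem_normalizer_iff]
  intro b
  constructor
  · intro hb
    rw [← h, mem_conjA]
    simpa [mul_assoc] using hb
  · intro hb
    rw [← h, mem_conjA] at hb
    simpa [mul_assoc] using hb

lemma normalizer_transport {A E : Subgroup G} (hAE : A ≤ E) {x : ↥E}
    (hx : x ∈ (Subgroup.normalizer ((A.subgroupOf E : Subgroup ↥E) : Set ↥E))) : (x : G) ∈ (Subgroup.normalizer (A : Set G)) := by
  rw [Subgroup.mem_normalizer_iff] at hx ⊢
  intro h
  constructor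
  · intro hh
    have h1 : (⟨h, hAE hh⟩ : ↥E) ∈ A.subgroupOf E := Subgroup.mem_subgroupOf.mpr hh
    have h2 := (hx _).mp h1
    exact Subgroup.mem_subgroupOf.mp h2
  · intro hh
    have hhE : h ∈ E := by
      have h3 : (x:G)⁻¹ * ((x:G) * h * (x:G)⁻¹) * (x:G) ∈ E :=
        mul_mem (mul_mem (inv_mem x.2) (hAE hh)) x.2
      simpa [mul_assoc] using h3
    have h1 : (x * ⟨h, hhE⟩ * x⁻¹ : ↥E) ∈ A.subgroupOf E := Subgroup.mem_subgroupOf.mpr hh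
    have h2 := (hx _).mpr h1
    exact Subgroup.mem_subgroupOf.mp h2

lemma modular_restrict {A E : Subgroup G} (h : IsModularSubgroup A) (hAE : A ≤ E) :
    IsModularSubgroup (A.subgroupOf E) := by
  have hinj : Function.Injective E.subtype := E.subtype_injective
  have hmapA : (A.subgroupOf E).map E.subtype = A := by
    rw [Subgroup.subgroupOf_map_subtype, inf_of_le_left hAE]
  constructor
  · intro X Z hXZ
    apply Subgroup.map_injective hinj
    rw [Subgroup.map_sup, Subgroup.map_inf _ _ _ hinj, Subgroup.map_inf _ _ _ hinj,
      Subgroup.map_sup, hmapA]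
    exact h.1 _ _ ((Subgroup.gc_map_comap E.subtype).monotone_l hXZ)
  · intro Y Z hAZ
    apply Subgroup.map_injective hinj
    rw [Subgroup.map_sup, Subgroup.map_inf _ _ _ hinj, Subgroup.map_inf _ _ _ hinj,
      Subgroup.map_sup, hmapA]
    refine h.2 _ _ ?_
    have := (Subgroup.gc_map_comap E.subtype).monotone_l hAZ
    rwa [hmapA] at this

lemma card_quotient_dvd_of_le {X : Type*} [Group X] [Finite X] {K₁ K₂ : Subgroup X}
    [K₁.Normal] [K₂.Normal] (h : K₁ ≤ K₂) :
    Nat.card (X ⧸ K₂) ∣ Nat.card (X ⧸ K₁) := by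
  have hs : Function.Surjective
      (QuotientGroup.map K₁ K₂ (MonoidHom.id X) (fun a ha => h ha)) := by
    intro q
    obtain ⟨y, rfl⟩ := QuotientGroup.mk'_surjective K₂ q
    exact ⟨QuotientGroup.mk y, rfl⟩
  exact Subgroup.card_dvd_of_surjective _ hs

lemma card_sup_dvd_of_normal [Finite G] (N₁ N₂ : Subgroup G) [hn : N₂.Normal] :
    Nat.card (N₁ ⊔ N₂ : Subgroup G) ∣ Nat.card N₁ * Nat.card N₂ := by
  haveI : (N₂.subgroupOf (N₁ ⊔ N₂)).Normal := hn.subgroupOf _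
  set f : ↥N₁ →* ↥(N₁ ⊔ N₂) ⧸ N₂.subgroupOf (N₁ ⊔ N₂) :=
    (QuotientGroup.mk' _).comp (Subgroup.inclusion le_sup_left) with hf
  have hsurj : Function.Surjective f := by
    intro q
    obtain ⟨y, rfl⟩ := QuotientGroup.mk'_surjective _ q
    have hy : (y : G) ∈ (N₁ : Set G) * (N₂ : Set G) := by
      rw [← Subgroup.mul_normal]; exact y.2
    obtain ⟨a, ha, b, hb, hab⟩ := hy
    refine ⟨⟨a, ha⟩, ?_⟩
    show QuotientGroup.mk' _ (Subgroup.inclusion le_sup_left ⟨a, ha⟩) = QuotientGroup.mk' _ y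
    rw [QuotientGroup.mk'_eq_mk']
    exact ⟨⟨b, (le_sup_right : N₂ ≤ N₁ ⊔ N₂) hb⟩, Subgroup.mem_subgroupOf.mpr hb,
      Subtype.ext hab⟩
  have h1 : Nat.card (↥(N₁ ⊔ N₂) ⧸ N₂.subgroupOf (N₁ ⊔ N₂)) ∣ Nat.card N₁ :=
    Subgroup.card_dvd_of_surjective f hsurj
  have h2 := Subgroup.card_eq_card_quotient_mul_card_subgroup (N₂.subgroupOf (N₁ ⊔ N₂))
  rw [card_subgroupOf_eq le_sup_right] at h2
  rw [h2]
  exact mul_dvd_mul h1 dvd_rfl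

lemma card_sup_dvd [Finite G] {N₁ N₂ : Subgroup G} (h : N₁ ≤ (Subgroup.normalizer (N₂ : Set G))) :
    Nat.card (N₁ ⊔ N₂ : Subgroup G) ∣ Nat.card N₁ * Nat.card N₂ := by
  have h2 : N₂ ≤ (Subgroup.normalizer (N₂ : Set G)) := Subgroup.le_normalizer
  have h12 : N₁ ⊔ N₂ ≤ (Subgroup.normalizer (N₂ : Set G)) := sup_le h h2
  haveI : (N₂.subgroupOf (Subgroup.normalizer (N₂ : Set G))).Normal := Subgroup.normal_in_normalizer
  have hsub : (N₁.subgroupOf (Subgroup.normalizer (N₂ : Set G))) ⊔ (N₂.subgroupOf (Subgroup.normalizer (N₂ : Set G)))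
      = (N₁ ⊔ N₂).subgroupOf (Subgroup.normalizer (N₂ : Set G)) := by
    apply Subgroup.map_injective (Subgroup.subtype_injective _)
    rw [Subgroup.map_sup, Subgroup.subgroupOf_map_subtype, Subgroup.subgroupOf_map_subtype,
      Subgroup.subgroupOf_map_subtype, inf_of_le_left h, inf_of_le_left h2, inf_of_le_left h12]
  have hmain := card_sup_dvd_of_normal (N₁.subgroupOf (Subgroup.normalizer (N₂ : Set G))) (N₂.subgroupOf (Subgroup.normalizer (N₂ : Set G)))
  rw [hsub, card_subgroupOf_eq h12, card_subgroupOf_eq h, card_subgroupOf_eq h2] at hmain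
  exact hmain

lemma subgroupOf_subgroupOf_mono {U V E : Subgroup G} (hUV : U ≤ V) :
    U.subgroupOf E ≤ V.subgroupOf E :=
  fun _ ha => Subgroup.mem_subgroupOf.mpr (hUV (Subgroup.mem_subgroupOf.mp ha))

lemma step_restrict_normal {U V E : Subgroup G}
    (hN : (U.subgroupOf V).Normal) :
    ((U.subgroupOf E).subgroupOf (V.subgroupOf E)).Normal := by
  constructor
  intro nn hnn g
  rw [Subgroup.mem_subgroupOf, Subgroup.mem_subgroupOf] at hnn
  rw [Subgroup.mem_subgroupOf, Subgroup.mem_subgroupOf]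
  have hnV : ((nn : ↥E) : G) ∈ V := Subgroup.mem_subgroupOf.mp nn.2
  have hgV : ((g : ↥E) : G) ∈ V := Subgroup.mem_subgroupOf.mp g.2
  have h2 := hN.conj_mem ⟨((nn : ↥E) : G), hnV⟩ (Subgroup.mem_subgroupOf.mpr hnn)
    ⟨((g : ↥E) : G), hgV⟩
  exact Subgroup.mem_subgroupOf.mp h2

lemma card_quotient_normalCore_restrict [Finite G] (U V E : Subgroup G) :
    Nat.card ((V.subgroupOf E) ⧸ ((U.subgroupOf E).subgroupOf (V.subgroupOf E)).normalCore) ∣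
      Nat.card (V ⧸ (U.subgroupOf V).normalCore) := by
  set core := (U.subgroupOf V).normalCore with hcore
  set ι : ↥(V.subgroupOf E) →* ↥V :=
    { toFun := fun a => ⟨((a : ↥E) : G), Subgroup.mem_subgroupOf.mp a.2⟩
      map_one' := rfl
      map_mul' := fun _ _ => rfl } with hι
  set ψ := (QuotientGroup.mk' core).comp ι with hψ
  have hker : ψ.ker ≤ ((U.subgroupOf E).subgroupOf (V.subgroupOf E)).normalCore := by
    refine Subgroup.normal_le_normalCore.mpr ?_
    intro a ha
    have h1 : ι a ∈ core := (QuotientGroup.eq_one_iff _).mp ha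
    have h2 : ι a ∈ U.subgroupOf V := Subgroup.normalCore_le _ h1
    exact Subgroup.mem_subgroupOf.mpr (Subgroup.mem_subgroupOf.mpr
      (Subgroup.mem_subgroupOf.mp h2))
  calc Nat.card ((V.subgroupOf E) ⧸ ((U.subgroupOf E).subgroupOf (V.subgroupOf E)).normalCore)
      ∣ Nat.card ((V.subgroupOf E) ⧸ ψ.ker) := card_quotient_dvd_of_le hker
    _ = Nat.card ψ.range := Nat.card_congr (QuotientGroup.quotientKerEquivRange ψ).toEquiv
    _ ∣ Nat.card (V ⧸ core) := Subgroup.card_subgroup_dvd_card _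

lemma primary_of_card_dvd {Q Q' : Type*}
    (h : IsSigmaPrimary σ Q) (hd : Nat.card Q' ∣ Nat.card Q) : IsSigmaPrimary σ Q' := by
  obtain ⟨i, hi⟩ := h
  exact ⟨i, fun p hp hdvd => hi p hp (hdvd.trans hd)⟩

/-- A `σ`-subnormal chain from `A` up to `T` of length `n`. -/
def SChain (σ : I → Set ℕ) {G : Type*} [Group G] (A T : Subgroup G) (n : ℕ) : Prop :=
  ∃ c : Fin (n + 1) → Subgroup G,
    c 0 = A ∧ c (Fin.last n) = T ∧
    ∀ i : Fin n,
      c i.castSucc ≤ c i.succ ∧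
        (((c i.castSucc).subgroupOf (c i.succ)).Normal ∨
          IsSigmaPrimary σ (c i.succ ⧸ ((c i.castSucc).subgroupOf (c i.succ)).normalCore))

lemma SChain.le {A T : Subgroup G} {n : ℕ} (h : SChain σ A T n) : A ≤ T := by
  obtain ⟨c, h0, hl, hs⟩ := h
  have hmono : ∀ j : Fin (n + 1), c 0 ≤ c j := by
    intro j
    induction j using Fin.induction with
    | zero => exact le_rfl
    | succ i ih => exact ih.trans (hs i).1
  rw [← h0, ← hl]
  exact hmono _

lemma SChain.restrict [Finite G] {A T : Subgroup G} {n : ℕ} (h : SChain σ A T n)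
    (E : Subgroup G) (hAE : A ≤ E) (hET : E ≤ T) :
    SChain σ (A.subgroupOf E) ⊤ n := by
  obtain ⟨c, h0, hl, hs⟩ := h
  refine ⟨fun i => (c i).subgroupOf E, ?_, ?_, fun i => ?_⟩
  · simp only [h0]
  · simp only [hl]
    exact Subgroup.subgroupOf_eq_top.mpr hET
  · obtain ⟨hle, hor⟩ := hs i
    refine ⟨subgroupOf_subgroupOf_mono hle, ?_⟩
    rcases hor with hnor | hprim
    · exact Or.inl (step_restrict_normal hnor)
    · exact Or.inr (primary_of_card_dvd hprim (card_quotient_normalCore_restrict _ _ _))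

/-- The inclusion of `G` into `↥(⊤ : Subgroup G)`. -/
def inclTop (G : Type*) [Group G] : G →* ↥(⊤ : Subgroup G) :=
  { toFun := fun g => ⟨g, trivial⟩, map_one' := rfl, map_mul' := fun _ _ => rfl }

end SQNAux


namespace SQNAux

universe u

lemma master {I : Type*} (σ : I → Set ℕ) (hσ : IsPrimePartition σ) :
    ∀ (n : ℕ) {G : Type u} [Group G] [Finite G] (A : Subgroup G),
      IsModularSubgroup A → SChain σ A ⊤ n →
      ∀ x : G, sigmaOf σ (orderOf x) ∩ sigmaOf σ (Nat.card A) = ∅ → x ∈ (Subgroup.normalizer (A : Set G)) := by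
  intro n
  induction n with
  | zero =>
    intro G _ _ A _ hch x _
    obtain ⟨c, h0, hl, -⟩ := hch
    have hA : A = ⊤ := by
      rw [← h0, ← hl, Subsingleton.elim (0 : Fin 1) (Fin.last 0)]
    rw [hA, Subgroup.mem_normalizer_iff]
    intro h
    simp
  | succ n IH =>
    intro G _ _ A hmod hch x hdisj
    obtain ⟨c, h0, hlast, hstep⟩ := hch
    set M := c ((Fin.last n).castSucc) with hM
    have htrunc : SChain σ A M n := by
      refine ⟨fun j => c j.castSucc, ?_, rfl, fun j => ?_⟩
      · simp only [Fin.castSucc_zero, h0]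
      · have h := hstep j.castSucc
        rwa [Fin.succ_castSucc] at h
    have hAM : A ≤ M := htrunc.le
    -- The common endgame: a normal subgroup `D` with `A ≤ D ≤ M`.
    have endgame : ∀ D : Subgroup G, D.Normal → A ≤ D → D ≤ M → x ∈ (Subgroup.normalizer (A : Set G)) := by
      intro D hDnorm hAD hDM
      set X := Subgroup.zpowers x with hXdef
      have hE0 : A ⊔ (X ⊓ D) = (A ⊔ X) ⊓ D := hmod.2 X D hAD
      set E : Subgroup G := (A ⊔ X) ⊓ D with hEdef
      have hE : A ⊔ (X ⊓ D) = E := hE0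
      have hAE : A ≤ E := by rw [← hE]; exact le_sup_left
      have hED : E ≤ D := inf_le_right
      have hEM : E ≤ M := hED.trans hDM
      have hEH : E ≤ A ⊔ X := inf_le_left
      have hxX : x ∈ X := Subgroup.mem_zpowers x
      have hxH : x ∈ A ⊔ X := (le_sup_right : X ≤ A ⊔ X) hxX
      have hxnormE : x ∈ (Subgroup.normalizer (E : Set G)) := by
        rw [Subgroup.mem_normalizer_iff]
        intro h
        simp only [hEdef, Subgroup.mem_inf]
        constructor
        · rintro ⟨h1, h2⟩
          exact ⟨mul_mem (mul_mem hxH h1) (inv_mem hxH), hDnorm.conj_mem _ h2 _⟩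
        · rintro ⟨h1, h2⟩
          constructor
          · have h3 := mul_mem (mul_mem (inv_mem hxH) h1) hxH
            simpa [mul_assoc] using h3
          · have h3 := hDnorm.conj_mem _ h2 x⁻¹
            simpa [mul_assoc] using h3
      have hnormEle : E ≤ (Subgroup.normalizer (A : Set G)) := by
        rw [← hE]
        refine sup_le Subgroup.le_normalizer ?_
        intro cel hc
        have hcE : cel ∈ E := by rw [← hE]; exact (le_sup_right : X ⊓ D ≤ A ⊔ (X ⊓ D)) hc
        have hcX : cel ∈ X := (Subgroup.mem_inf.mp hc).1
        have hord : orderOf cel ∣ orderOf x := by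
          have h4 := orderOf_dvd_card_of_mem hcX
          rwa [Nat.card_zpowers] at h4
        have hdisj' : sigmaOf σ (orderOf cel) ∩ sigmaOf σ (Nat.card A) = ∅ := by
          rw [Set.eq_empty_iff_forall_notMem]
          rintro i ⟨hi1, hi2⟩
          exact Set.eq_empty_iff_forall_notMem.mp hdisj i ⟨sigmaOf_mono hord hi1, hi2⟩
        have hchE := htrunc.restrict E hAE hEM
        have hmodE := modular_restrict hmod hAE
        have hres := IH (A.subgroupOf E) hmodE hchE ⟨cel, hcE⟩ ?_
        · exact normalizer_transport hAE hres
        · rw [← orderOf_coe_subgroup (⟨cel, hcE⟩ : ↥E), card_subgroupOf_eq hAE]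
          exact hdisj'
      -- the join of all `E`-invariant π-subgroups of `E`
      set π : Set ℕ := {p | p.Prime ∧ p ∣ Nat.card A} with hπdef
      set S : Set (Subgroup G) :=
        {N | N ≤ E ∧ (∀ g ∈ E, conjA g N = N) ∧ IsPiGroup π N} with hSdef
      have hconjS : ∀ g : G, g ∈ (Subgroup.normalizer (E : Set G)) → ∀ N ∈ S, conjA g N ∈ S := by
        rintro g hg N ⟨hNE, hNc, hNpi⟩
        refine ⟨?_, ?_, ?_⟩
        · calc conjA g N ≤ conjA g E := conjA_mono hNE
            _ = E := conjA_eq_of_mem_normalizer hg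
        · intro h hh
          rw [conjA_conjA]
          have h2 : g⁻¹ * h * g ∈ E := by
            have h3 := Subgroup.mem_normalizer_iff.mp (inv_mem hg) h
            simpa using h3.mp hh
          have h4 : h * g = g * (g⁻¹ * h * g) := by group
          rw [h4, ← conjA_conjA, hNc _ h2]
        · intro p hp hd
          exact hNpi p hp (by rwa [conjA_card] at hd)
      have hS_sup : ∀ N₁ ∈ S, ∀ N₂ ∈ S, N₁ ⊔ N₂ ∈ S := by
        rintro N₁ ⟨h1E, h1c, h1pi⟩ N₂ ⟨h2E, h2c, h2pi⟩
        refine ⟨sup_le h1E h2E, ?_, ?_⟩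
        · intro g hg; rw [conjA_sup, h1c g hg, h2c g hg]
        · have hnorm12 : N₁ ≤ (Subgroup.normalizer (N₂ : Set G)) := fun a ha =>
            mem_normalizer_of_conjA (h2c a (h1E ha))
          have hcard := card_sup_dvd hnorm12
          intro p hp hd
          rcases (Nat.Prime.dvd_mul hp).mp (hd.trans hcard) with h | h
          · exact h1pi p hp h
          · exact h2pi p hp h
      haveI : Finite (Subgroup G) := Finite.of_injective _ SetLike.coe_injective
      have hbotS : (⊥ : Subgroup G) ∈ S := by
        refine ⟨bot_le, fun g _ => conjA_bot g, fun p hp hd => ?_⟩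
        rw [Subgroup.card_bot] at hd
        exact absurd (Nat.dvd_one.mp hd) hp.ne_one
      have hPS : sSup S ∈ S := by
        refine Set.Finite.induction_on_subset (motive := fun T _ => sSup T ∈ S) S (Set.toFinite S) ?_ ?_
        · show sSup (∅ : Set (Subgroup G)) ∈ S
          rw [sSup_empty]; exact hbotS
        · intro a s haS _ _ hsSup
          show sSup (insert a s) ∈ S
          rw [sSup_insert]
          exact hS_sup _ haS _ hsSup
      obtain ⟨hPE, hPc, hPpi⟩ := hPS
      have hAS : A ∈ S :=
        ⟨hAE, fun g hg => conjA_eq_of_mem_normalizer (hnormEle hg), fun p hp hd => ⟨hp, hd⟩⟩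
      have hAP : A ≤ sSup S := le_sSup hAS
      have hxP : conjA x (sSup S) = sSup S := by
        rw [conjA_sSup]
        congr 1
        apply Set.Subset.antisymm
        · rintro _ ⟨N, hN, rfl⟩
          exact hconjS x hxnormE N hN
        · intro N hN
          refine ⟨conjA x⁻¹ N, hconjS x⁻¹ (inv_mem hxnormE) N hN, ?_⟩
          rw [conjA_conjA, mul_inv_cancel, conjA_one]
      have hXP : X ⊓ sSup S = ⊥ := by
        rw [eq_bot_iff]
        intro g hg
        rw [Subgroup.mem_bot]
        by_contra hne
        have hone : orderOf g ≠ 1 := fun h1 => hne (orderOf_eq_one_iff.mp h1)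
        obtain ⟨p, hp, hpd⟩ := Nat.exists_prime_and_dvd hone
        have hp1 : p ∣ orderOf x := by
          have h5 := orderOf_dvd_card_of_mem (Subgroup.mem_inf.mp hg).1
          rw [Nat.card_zpowers] at h5
          exact hpd.trans h5
        have hp2 : p ∣ Nat.card A :=
          (hPpi p hp (hpd.trans (orderOf_dvd_card_of_mem (Subgroup.mem_inf.mp hg).2))).2
        obtain ⟨i, hpi, -⟩ := hσ.2 p hp
        exact Set.eq_empty_iff_forall_notMem.mp hdisj i ⟨⟨p, hp, hpi, hp1⟩, ⟨p, hp, hpi, hp2⟩⟩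
      have hfin : A ⊔ (X ⊓ sSup S) = (A ⊔ X) ⊓ sSup S := hmod.2 X (sSup S) hAP
      rw [hXP, sup_bot_eq] at hfin
      have hPle : sSup S ≤ A ⊔ X := hPE.trans hEH
      rw [inf_eq_right.mpr hPle] at hfin
      refine mem_normalizer_of_conjA ?_
      rw [hfin]
      exact hxP
    -- analysis of the top step of the chain
    have htop := hstep (Fin.last n)
    rw [Fin.succ_last, hlast] at htop
    rcases htop.2 with hnorm | hprim
    · have hMn : M.Normal := by
        constructor
        intro m hm g
        have h6 := hnorm.conj_mem ⟨m, Subgroup.mem_top m⟩ (Subgroup.mem_subgroupOf.mpr hm)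
          ⟨g, Subgroup.mem_top g⟩
        exact Subgroup.mem_subgroupOf.mp h6
      exact endgame M hMn hAM le_rfl
    · obtain ⟨i, hi⟩ := hprim
      set core := ((M.subgroupOf (⊤ : Subgroup G))).normalCore with hcore
      set φ : G →* ((⊤ : Subgroup G) ⧸ core) :=
        (QuotientGroup.mk' core).comp (inclTop G) with hφ
      have hker_le_M : ∀ g : G, φ g = 1 → g ∈ M := by
        intro g hg
        have h1 : inclTop G g ∈ core := (QuotientGroup.eq_one_iff _).mp hg
        exact Subgroup.mem_subgroupOf.mp (Subgroup.normalCore_le _ h1)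
      by_cases hx1 : φ x = 1
      · have hxM : x ∈ M := hker_le_M x hx1
        have hchM := htrunc.restrict M hAM le_rfl
        have hmodM := modular_restrict hmod hAM
        have hres := IH (A.subgroupOf M) hmodM hchM ⟨x, hxM⟩ ?_
        · exact normalizer_transport hAM hres
        · rw [← orderOf_coe_subgroup (⟨x, hxM⟩ : ↥M), card_subgroupOf_eq hAM]
          exact hdisj
      · have hnotA : i ∉ sigmaOf σ (Nat.card A) := by
          intro hiA
          have hone : orderOf (φ x) ≠ 1 := fun h1 => hx1 (orderOf_eq_one_iff.mp h1)
          obtain ⟨p, hp, hpd⟩ := Nat.exists_prime_and_dvd hone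
          have hpx : p ∣ orderOf x := hpd.trans (orderOf_map_dvd φ x)
          have hpQ : p ∈ σ i := hi p hp (hpd.trans (orderOf_dvd_natCard (φ x)))
          exact Set.eq_empty_iff_forall_notMem.mp hdisj i ⟨⟨p, hp, hpQ, hpx⟩, hiA⟩
        have hAker : A ≤ φ.ker := by
          intro a ha
          rw [MonoidHom.mem_ker]
          by_contra hne
          have hone : orderOf (φ a) ≠ 1 := fun h1 => hne (orderOf_eq_one_iff.mp h1)
          obtain ⟨p, hp, hpd⟩ := Nat.exists_prime_and_dvd hone
          have hpA : p ∣ Nat.card A :=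
            ((hpd.trans (orderOf_map_dvd φ a)).trans (orderOf_dvd_card_of_mem ha))
          have hpQ : p ∈ σ i := hi p hp (hpd.trans (orderOf_dvd_natCard (φ a)))
          exact hnotA ⟨p, hp, hpQ, hpA⟩
        have hkerM : φ.ker ≤ M := fun g hg => hker_le_M g (MonoidHom.mem_ker.mp hg)
        exact endgame φ.ker (MonoidHom.normal_ker φ) hAker hkerM

end SQNAux

/-- A `σ`-quasinormal subgroup `A` of `G` is `σ`-seminormal in `G`:
every `x ∈ G` with `σ(|x|) ∩ σ(A) = ∅` normalizes `A`. -/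
theorem sigmaQuasinormal_sigmaSeminormal {I : Type*} (σ : I → Set ℕ)
    (hσ : IsPrimePartition σ) {G : Type*} [Group G] [Finite G] (A : Subgroup G)
    (hA : IsSigmaQuasinormal σ A) :
    ∀ x : G, sigmaOf σ (orderOf x) ∩ sigmaOf σ (Nat.card A) = ∅ →
      x ∈ Subgroup.normalizer (A : Set G) := by
  intro x hx
  obtain ⟨hmod, n, c, h0, hl, hs⟩ := hA
  exact SQNAux.master σ hσ n A hmod ⟨c, h0, hl, hs⟩ x hx
end

section
/- Let π be a set of primes with complement π′, and let A be a modular subgroup of a finite group G for which there is a chain of subgroups A = A_0 ≤ A_1 ≤ ⋯ ≤ A_n = G such that for each i = 1,…,n either A_{i-1} is normal in A_i or A_i/(A_{i-1})_{A_i} is a π_0-group for some π_0 ∈ {π, π′}. If G possesses a Hall π_0-subgroup for π_0 ∈ {π, π′}, then A permutes with each Hall π_0-subgroup H of G, i.e., AH = HA. -/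
open Subgroup Pointwise

section PermHallHelpers

open Subgroup

variable {Gr : Type*} [Group Gr]

/-- If the set products of two subgroups commute, the product is the join. -/
theorem coe_sup_of_comm {S T : Subgroup Gr}
    (h : (S : Set Gr) * T = (T : Set Gr) * S) :
    ((S ⊔ T : Subgroup Gr) : Set Gr) = (S : Set Gr) * T := by
  have hmul : ∀ {x y : Gr}, x ∈ (S : Set Gr) * T → y ∈ (S : Set Gr) * T →
      x * y ∈ (S : Set Gr) * T := by
    intro x y hx hy
    obtain ⟨a, ha, b, hb, rfl⟩ := Set.mem_mul.mp hx
    obtain ⟨cc, hc, d, hd, rfl⟩ := Set.mem_mul.mp hy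
    have hbc : b * cc ∈ (S : Set Gr) * T := by
      rw [h]; exact Set.mem_mul.mpr ⟨b, hb, cc, hc, rfl⟩
    obtain ⟨e, he, f, hf, hef⟩ := Set.mem_mul.mp hbc
    refine Set.mem_mul.mpr ⟨a * e, S.mul_mem ha he, f * d, T.mul_mem hf hd, ?_⟩
    rw [show a * e * (f * d) = a * (e * f) * d by group, hef]; group
  have hinv : ∀ {x : Gr}, x ∈ (S : Set Gr) * T → x⁻¹ ∈ (S : Set Gr) * T := by
    intro x hx
    obtain ⟨a, ha, b, hb, rfl⟩ := Set.mem_mul.mp hx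
    have : b⁻¹ * a⁻¹ ∈ (T : Set Gr) * S :=
      Set.mem_mul.mpr ⟨b⁻¹, T.inv_mem hb, a⁻¹, S.inv_mem ha, rfl⟩
    rw [mul_inv_rev, h]
    exact this
  let P : Subgroup Gr :=
    { carrier := (S : Set Gr) * T
      one_mem' := Set.mem_mul.mpr ⟨1, S.one_mem, 1, T.one_mem, one_mul 1⟩
      mul_mem' := fun hx hy => hmul hx hy
      inv_mem' := fun hx => hinv hx }
  have hSP : S ≤ P := fun s hs => Set.mem_mul.mpr ⟨s, hs, 1, T.one_mem, mul_one s⟩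
  have hTP : T ≤ P := fun t ht => Set.mem_mul.mpr ⟨1, S.one_mem, t, ht, one_mul t⟩
  apply Set.Subset.antisymm
  · intro x hx
    exact (sup_le hSP hTP) hx
  · intro x hx
    obtain ⟨a, ha, b, hb, rfl⟩ := Set.mem_mul.mp hx
    exact (S ⊔ T).mul_mem (le_sup_left (a := S) ha) (le_sup_right (b := T) hb)

theorem permutes_top (H : Subgroup Gr) : Permutes (⊤ : Subgroup Gr) H := by
  show ((⊤ : Subgroup Gr) : Set Gr) * (H : Set Gr) = (H : Set Gr) * ((⊤ : Subgroup Gr) : Set Gr)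
  have h1 : ((⊤ : Subgroup Gr) : Set Gr) * (H : Set Gr) = Set.univ :=
    Set.eq_univ_of_forall fun x =>
      Set.mem_mul.mpr ⟨x, Subgroup.mem_top x, 1, H.one_mem, mul_one x⟩
  have h2 : (H : Set Gr) * ((⊤ : Subgroup Gr) : Set Gr) = Set.univ :=
    Set.eq_univ_of_forall fun x =>
      Set.mem_mul.mpr ⟨1, H.one_mem, x, Subgroup.mem_top x, one_mul x⟩
  rw [h1, h2]

theorem card_lt_of_ne_top [Finite Gr] {M : Subgroup Gr} (h : M ≠ ⊤) :
    Nat.card ↥M < Nat.card Gr := by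
  have hdvd : Nat.card ↥M ∣ Nat.card Gr := ⟨M.index, M.card_mul_index.symm⟩
  have hne : Nat.card ↥M ≠ Nat.card Gr := fun he => h (Subgroup.eq_top_of_card_eq M he)
  exact lt_of_le_of_ne (Nat.le_of_dvd Nat.card_pos hdvd) hne

theorem isModular_subgroupOf {A E : Subgroup Gr} (hmod : IsModularSubgroup A)
    (hAE : A ≤ E) : IsModularSubgroup (A.subgroupOf E) := by
  have inj : Function.Injective (Subgroup.map E.subtype) :=
    Subgroup.map_injective E.subtype_injective
  have hmapA : (A.subgroupOf E).map E.subtype = A := by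
    rw [Subgroup.subgroupOf_map_subtype, inf_eq_left.mpr hAE]
  have minf : ∀ X Y : Subgroup ↥E,
      (X ⊓ Y).map E.subtype = X.map E.subtype ⊓ Y.map E.subtype :=
    fun X Y => Subgroup.map_inf X Y _ E.subtype_injective
  constructor
  · intro X Z hXZ
    apply inj
    simp only [Subgroup.map_sup, minf, hmapA]
    exact hmod.1 _ _ (Subgroup.map_mono hXZ)
  · intro Y Z hAZ
    apply inj
    simp only [Subgroup.map_sup, minf, hmapA]
    exact hmod.2 _ _ (hmapA ▸ Subgroup.map_mono hAZ)

theorem permutes_map {W A B : Subgroup Gr} (hA : A ≤ W) (hB : B ≤ W)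
    (h : Permutes (A.subgroupOf W) (B.subgroupOf W)) :
    (A : Set Gr) * B = (B : Set Gr) * A := by
  have hcoe : ∀ X : Subgroup Gr, X ≤ W →
      (⇑W.subtype) '' ((X.subgroupOf W : Subgroup ↥W) : Set ↥W) = (X : Set Gr) := by
    intro X hX
    rw [← Subgroup.coe_map, Subgroup.subgroupOf_map_subtype, inf_eq_left.mpr hX]
  have himg := congrArg (fun s : Set ↥W => (⇑W.subtype) '' s) h
  simp only [Set.image_mul] at himg
  rwa [hcoe A hA, hcoe B hB] at himg

theorem index_subgroupOf_of_mul_univ {U H : Subgroup Gr}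
    (h : (U : Set Gr) * (H : Set Gr) = Set.univ) : (H.subgroupOf U).index = H.index := by
  rw [Subgroup.index_eq_card, Subgroup.index_eq_card]
  have wd : ∀ a b : ↥U, @Setoid.r _ (QuotientGroup.leftRel (H.subgroupOf U)) a b →
      @Setoid.r _ (QuotientGroup.leftRel H) (a : Gr) (b : Gr) := by
    intro a b hab
    rw [QuotientGroup.leftRel_apply] at hab
    apply QuotientGroup.leftRel_apply.mpr
    have h5 : ((a⁻¹ * b : ↥U) : Gr) ∈ H := Subgroup.mem_subgroupOf.mp hab
    simpa using h5
  refine Nat.card_congr (Equiv.ofBijective (Quotient.map' (fun u : ↥U => (u : Gr)) wd)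
    ⟨?_, ?_⟩)
  · intro x y
    refine Quotient.inductionOn₂' x y ?_
    intro a b hab
    rw [Quotient.map'_mk'', Quotient.map'_mk''] at hab
    apply Quotient.sound'
    have h2 := QuotientGroup.leftRel_apply.mp (Quotient.exact' hab)
    apply QuotientGroup.leftRel_apply.mpr
    rw [Subgroup.mem_subgroupOf]
    simpa using h2
  · intro q
    refine Quotient.inductionOn' q ?_
    intro g
    have hg : g ∈ (U : Set Gr) * H := by rw [h]; trivial
    obtain ⟨u, hu, t, ht, rfl⟩ := Set.mem_mul.mp hg
    refine ⟨Quotient.mk'' ⟨u, hu⟩, ?_⟩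
    rw [Quotient.map'_mk'']
    apply Quotient.sound'
    apply QuotientGroup.leftRel_apply.mpr
    simpa using ht

theorem relindex_dvd_index_of_normal' [Finite Gr] {M H : Subgroup Gr} (hM : M.Normal) :
    H.relIndex M ∣ H.index := by
  haveI := hM
  have h1 : H.relIndex M = (H.subgroupOf (M ⊔ H)).relIndex (M.subgroupOf (M ⊔ H)) :=
    (Subgroup.relIndex_subgroupOf le_sup_left).symm
  have hmul : ((M.subgroupOf (M ⊔ H) : Subgroup ↥(M ⊔ H)) : Set ↥(M ⊔ H)) *
      ((H.subgroupOf (M ⊔ H) : Subgroup ↥(M ⊔ H)) : Set ↥(M ⊔ H)) = Set.univ := by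
    apply Set.eq_univ_of_forall
    intro x
    have hx : (x : Gr) ∈ (M : Set Gr) * H := by
      rw [← Subgroup.normal_mul]; exact x.2
    obtain ⟨a, ha, b, hb, hab⟩ := Set.mem_mul.mp hx
    exact Set.mem_mul.mpr ⟨⟨a, le_sup_left (b := H) ha⟩, Subgroup.mem_subgroupOf.mpr ha,
      ⟨b, le_sup_right (a := M) hb⟩, Subgroup.mem_subgroupOf.mpr hb, Subtype.ext hab⟩
  have h2 := index_subgroupOf_of_mul_univ hmul
  rw [h1]
  show ((H.subgroupOf (M ⊔ H)).subgroupOf (M.subgroupOf (M ⊔ H))).index ∣ _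
  rw [h2]
  exact ⟨(M ⊔ H).index, (Subgroup.relIndex_mul_index (le_sup_right : H ≤ M ⊔ H)).symm⟩

/-- Inclusion of `U ∩ E` (as a subgroup of `E`) into `U`. -/
def inclUE (U E : Subgroup Gr) : ↥(U.subgroupOf E) →* ↥U where
  toFun x := ⟨((x : ↥E) : Gr), Subgroup.mem_subgroupOf.mp x.2⟩
  map_one' := rfl
  map_mul' _ _ := rfl

theorem normal_subgroupOf_restrict {D U : Subgroup Gr} (E : Subgroup Gr)
    (h : (D.subgroupOf U).Normal) :
    ((D.subgroupOf E).subgroupOf (U.subgroupOf E)).Normal := by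
  constructor
  intro x hx g
  rw [Subgroup.mem_subgroupOf, Subgroup.mem_subgroupOf] at hx
  rw [Subgroup.mem_subgroupOf, Subgroup.mem_subgroupOf]
  have hxU : ((x : ↥E) : Gr) ∈ U := Subgroup.mem_subgroupOf.mp x.2
  have hgU : ((g : ↥E) : Gr) ∈ U := Subgroup.mem_subgroupOf.mp g.2
  have h2 := h.conj_mem ⟨((x : ↥E) : Gr), hxU⟩ (Subgroup.mem_subgroupOf.mpr hx)
    ⟨((g : ↥E) : Gr), hgU⟩
  have h3 := Subgroup.mem_subgroupOf.mp h2
  simpa using h3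

theorem piQuot_restrict [Finite Gr] {π₁ : Set ℕ} {D U : Subgroup Gr} (E : Subgroup Gr)
    (h : IsPiGroup π₁ (↥U ⧸ (D.subgroupOf U).normalCore)) :
    IsPiGroup π₁
      (↥(U.subgroupOf E) ⧸ ((D.subgroupOf E).subgroupOf (U.subgroupOf E)).normalCore) := by
  set N := (D.subgroupOf U).normalCore with hN
  set φ := (QuotientGroup.mk' N).comp (inclUE U E) with hφ
  have hker : φ.ker ≤ (D.subgroupOf E).subgroupOf (U.subgroupOf E) := by
    intro x hx
    have hx' : inclUE U E x ∈ N := by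
      rw [MonoidHom.mem_ker, hφ, MonoidHom.comp_apply] at hx
      exact (QuotientGroup.eq_one_iff _).mp hx
    have hD : ((inclUE U E x : ↥U) : Gr) ∈ D :=
      Subgroup.mem_subgroupOf.mp ((Subgroup.normalCore_le _) hx')
    rw [Subgroup.mem_subgroupOf, Subgroup.mem_subgroupOf]
    exact hD
  have hker2 : φ.ker ≤ ((D.subgroupOf E).subgroupOf (U.subgroupOf E)).normalCore :=
    Subgroup.normal_le_normalCore.mpr hker
  intro p hp hdvd
  apply h p hp
  have d1 : Nat.card
      (↥(U.subgroupOf E) ⧸ ((D.subgroupOf E).subgroupOf (U.subgroupOf E)).normalCore)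
      ∣ Nat.card (↥(U.subgroupOf E) ⧸ φ.ker) := by
    rw [← Subgroup.index_eq_card, ← Subgroup.index_eq_card]
    exact Subgroup.index_dvd_of_le hker2
  have d2 : Nat.card (↥(U.subgroupOf E) ⧸ φ.ker) = Nat.card φ.range :=
    Nat.card_congr (QuotientGroup.quotientKerEquivRange φ).toEquiv
  have d3 : Nat.card φ.range ∣ Nat.card (↥U ⧸ N) :=
    ⟨φ.range.index, φ.range.card_mul_index.symm⟩
  exact hdvd.trans (d1.trans (d2 ▸ d3))

theorem chain_step_restrict (π : Set ℕ) [Finite Gr] {D U : Subgroup Gr} (E : Subgroup Gr)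
    (hcond : (D.subgroupOf U).Normal ∨
      ∃ π₁ ∈ ({π, primeCompl π} : Set (Set ℕ)),
        IsPiGroup π₁ (↥U ⧸ (D.subgroupOf U).normalCore)) :
    ((D.subgroupOf E).subgroupOf (U.subgroupOf E)).Normal ∨
      ∃ π₁ ∈ ({π, primeCompl π} : Set (Set ℕ)),
        IsPiGroup π₁
          (↥(U.subgroupOf E) ⧸ ((D.subgroupOf E).subgroupOf (U.subgroupOf E)).normalCore) := by
  rcases hcond with h | ⟨π₁, h1, h2⟩
  · exact Or.inl (normal_subgroupOf_restrict E h)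
  · exact Or.inr ⟨π₁, h1, piQuot_restrict E h2⟩

theorem permutes_of_aux {A H W : Subgroup Gr} (hmod : IsModularSubgroup A) (hAW : A ≤ W)
    (hsub : ((A ⊔ H : Subgroup Gr) : Set Gr) ⊆ (W : Set Gr) * H)
    (hset : (A : Set Gr) * ((H ⊓ W : Subgroup Gr) : Set Gr) =
      ((H ⊓ W : Subgroup Gr) : Set Gr) * A) :
    Permutes A H := by
  have hmod2 : A ⊔ (H ⊓ W) = (A ⊔ H) ⊓ W := hmod.2 H W hAW
  have hAHW : ((A ⊔ (H ⊓ W) : Subgroup Gr) : Set Gr) =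
      (A : Set Gr) * ((H ⊓ W : Subgroup Gr) : Set Gr) := coe_sup_of_comm hset
  have key : ((A ⊔ H : Subgroup Gr) : Set Gr) = (A : Set Gr) * H := by
    apply Set.Subset.antisymm
    · intro x hx
      obtain ⟨w, hw, t, ht, hwt⟩ := Set.mem_mul.mp (hsub hx)
      have hxAH : x ∈ A ⊔ H := hx
      have hwAH : w ∈ A ⊔ H := by
        have hw' : w = x * t⁻¹ := by rw [← hwt]; group
        rw [hw']
        exact (A ⊔ H).mul_mem hxAH ((A ⊔ H).inv_mem (le_sup_right (a := A) ht))
      have hw2 : w ∈ A ⊔ (H ⊓ W) := by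
        rw [hmod2]; exact Subgroup.mem_inf.mpr ⟨hwAH, hw⟩
      have hw3 : w ∈ (A : Set Gr) * ((H ⊓ W : Subgroup Gr) : Set Gr) := by
        rw [← hAHW]; exact hw2
      obtain ⟨a, ha, u, hu, hau⟩ := Set.mem_mul.mp hw3
      refine Set.mem_mul.mpr ⟨a, ha, u * t, H.mul_mem (Subgroup.mem_inf.mp hu).1 ht, ?_⟩
      rw [← hwt, ← hau]; group
    · intro x hx
      obtain ⟨a, ha, t, ht, hat⟩ := Set.mem_mul.mp hx
      rw [← hat]
      exact (A ⊔ H).mul_mem (le_sup_left (b := H) ha) (le_sup_right (a := A) ht)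
  show (A : Set Gr) * H = (H : Set Gr) * A
  calc (A : Set Gr) * H = ((A ⊔ H : Subgroup Gr) : Set Gr) := key.symm
    _ = (((A ⊔ H : Subgroup Gr) : Set Gr))⁻¹ := by rw [inv_coe_set]
    _ = ((A : Set Gr) * (H : Set Gr))⁻¹ := by rw [key]
    _ = ((H : Set Gr))⁻¹ * ((A : Set Gr))⁻¹ := mul_inv_rev _ _
    _ = (H : Set Gr) * A := by rw [inv_coe_set, inv_coe_set]

end PermHallHelpers


theorem chain_shorten (π : Set ℕ) {G : Type*} [Group G] (A : Subgroup G) :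
    ∀ (n : ℕ) (c : Fin (n + 1) → Subgroup G), c 0 = A → c (Fin.last n) = ⊤ →
      (∀ i : Fin n, c i.castSucc ≤ c i.succ ∧
        (((c i.castSucc).subgroupOf (c i.succ)).Normal ∨
          ∃ π₁ ∈ ({π, primeCompl π} : Set (Set ℕ)),
            IsPiGroup π₁ (c i.succ ⧸ ((c i.castSucc).subgroupOf (c i.succ)).normalCore))) →
      A = ⊤ ∨ ∃ (m : ℕ) (c' : Fin (m + 2) → Subgroup G), c' 0 = A ∧
        c' (Fin.last (m + 1)) = ⊤ ∧
        (∀ i : Fin (m + 1), c' i.castSucc ≤ c' i.succ ∧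
          (((c' i.castSucc).subgroupOf (c' i.succ)).Normal ∨
            ∃ π₁ ∈ ({π, primeCompl π} : Set (Set ℕ)),
              IsPiGroup π₁ (c' i.succ ⧸ ((c' i.castSucc).subgroupOf (c' i.succ)).normalCore))) ∧
        c' (Fin.last m).castSucc ≠ ⊤ := by
  intro n
  induction n with
  | zero =>
    intro c hc0 hcl _
    left
    rw [← hc0]
    exact hcl
  | succ m ih =>
    intro c hc0 hcl hstep
    by_cases htop : c (Fin.last m).castSucc = ⊤
    · exact ih (fun i => c i.castSucc) (by simpa using hc0) htop
        (fun i => hstep i.castSucc)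
    · exact Or.inr ⟨m, c, hc0, hcl, hstep, htop⟩

set_option maxHeartbeats 1600000 in
theorem permHallAux (π : Set ℕ) (hπ : ∀ p ∈ π, Nat.Prime p) (N n : ℕ)
    (G : Type*) [Group G] [Finite G]
    (A : Subgroup G) (c : Fin (n + 1) → Subgroup G)
    (hNle : Nat.card G ≤ N)
    (hmod : IsModularSubgroup A) (hc0 : c 0 = A) (hcl : c (Fin.last n) = ⊤)
    (hstep : ∀ i : Fin n, c i.castSucc ≤ c i.succ ∧
      (((c i.castSucc).subgroupOf (c i.succ)).Normal ∨
        ∃ π₁ ∈ ({π, primeCompl π} : Set (Set ℕ)),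
          IsPiGroup π₁ (c i.succ ⧸ ((c i.castSucc).subgroupOf (c i.succ)).normalCore)))
    (π₀ : Set ℕ) (hπ₀ : π₀ ∈ ({π, primeCompl π} : Set (Set ℕ)))
    (H : Subgroup G) (hH : IsHallPiSubgroup π₀ H) : Permutes A H := by
  rcases chain_shorten π A n c hc0 hcl hstep with hA | ⟨m, c, hc0, hcl, hstep, hMtop0⟩
  · rw [hA]; exact permutes_top H
  · have hrec : ∀ E : Subgroup G, A ≤ E → Nat.card ↥E < N →
        ∀ HE : Subgroup ↥E, IsHallPiSubgroup π₀ HE → Permutes (A.subgroupOf E) HE := by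
      intro E hAE hcardE HE hHE
      have hmono' : ∀ i : Fin (m + 1),
          (c i.castSucc).subgroupOf E ≤ (c i.succ).subgroupOf E :=
        fun i x hx =>
          Subgroup.mem_subgroupOf.mpr ((hstep i).1 (Subgroup.mem_subgroupOf.mp hx))
      exact permHallAux π hπ (Nat.card ↥E) (m + 1) ↥E (A.subgroupOf E)
        (fun i => (c i).subgroupOf E) le_rfl (isModular_subgroupOf hmod hAE)
        (by show (c 0).subgroupOf E = A.subgroupOf E; rw [hc0])
        (by show (c (Fin.last (m + 1))).subgroupOf E = ⊤; rw [hcl]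
            simp [Subgroup.subgroupOf])
        (fun i => ⟨hmono' i, chain_step_restrict π E (hstep i).2⟩) π₀ hπ₀ HE hHE
    set M := c (Fin.last m).castSucc with hMdef
    have hMtop : M ≠ ⊤ := hMtop0
    · have htop' : c (Fin.last m).succ = ⊤ := hcl
      have hstepTop := hstep (Fin.last m)
      rw [htop'] at hstepTop
      rw [← hMdef] at hstepTop
      have hmono : Monotone c := Fin.monotone_iff_le_succ.mpr fun i => (hstep i).1
      have hAle : A ≤ M := by
        rw [← hc0, hMdef]
        exact hmono (Fin.zero_le _)
      have hltN : Nat.card ↥M < N := lt_of_lt_of_le (card_lt_of_ne_top hMtop) hNle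
      rcases hstepTop.2 with hnorm | ⟨π₁, hπ₁, hq⟩
      · -- top step normal : M is normal in G
        have hMnormal : M.Normal := by
          constructor
          intro x hx g
          have h2 := hnorm.conj_mem ⟨x, Subgroup.mem_top x⟩
            (Subgroup.mem_subgroupOf.mpr hx) ⟨g, Subgroup.mem_top g⟩
          have h3 := Subgroup.mem_subgroupOf.mp h2
          simpa using h3
        haveI := hMnormal
        have hallHM : IsHallPiSubgroup π₀ ((H ⊓ M).subgroupOf M) := by
          constructor
          · intro p hp hd
            refine hH.1 p hp ?_
            have e1 : Nat.card ↥((H ⊓ M).subgroupOf M) = Nat.card ↥(H ⊓ M) :=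
              Nat.card_congr (Subgroup.subgroupOfEquivOfLe inf_le_right).toEquiv
            rw [e1] at hd
            exact hd.trans (Subgroup.card_dvd_of_le inf_le_left)
          · intro p hp hd
            refine hH.2 p hp ?_
            have e2 : ((H ⊓ M).subgroupOf M).index = H.relIndex M :=
              Subgroup.inf_relIndex_right H M
            rw [e2] at hd
            exact hd.trans (relindex_dvd_index_of_normal' hMnormal)
        have hperm := hrec M hAle hltN _ hallHM
        have hset := permutes_map hAle (inf_le_right : H ⊓ M ≤ M) hperm
        apply permutes_of_aux hmod hAle ?_ hset
        intro x hx
        have hx2 : x ∈ M ⊔ H := (sup_le_sup_right hAle H) hx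
        have hx3 : x ∈ (M : Set G) * H := by
          rw [← Subgroup.normal_mul]; exact hx2
        exact hx3
      · -- top step primary
        set N0 := (M.subgroupOf (⊤ : Subgroup G)).normalCore with hN0def
        set K := N0.map (⊤ : Subgroup G).subtype with hKdef
        have hKM : K ≤ M := by
          rw [hKdef]
          have h1 : N0 ≤ M.subgroupOf ⊤ := Subgroup.normalCore_le _
          have h2 := Subgroup.map_mono (f := (⊤ : Subgroup G).subtype) h1
          rwa [Subgroup.subgroupOf_map_subtype, inf_top_eq] at h2
        have hKnormal : K.Normal := by
          constructor
          intro x hx g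
          rw [hKdef, Subgroup.mem_map] at hx ⊢
          obtain ⟨y, hy, hyx⟩ := hx
          refine ⟨⟨g, Subgroup.mem_top g⟩ * y * ⟨g, Subgroup.mem_top g⟩⁻¹,
            (Subgroup.normalCore_normal _).conj_mem y hy _, ?_⟩
          have hgg : ((⊤ : Subgroup G).subtype) ⟨g, Subgroup.mem_top g⟩ = g := rfl
          simp only [map_mul, map_inv, hgg, hyx]
        haveI := hKnormal
        have hcardq : Nat.card (G ⧸ K) = Nat.card (↥(⊤ : Subgroup G) ⧸ N0) := by
          rw [← Subgroup.index_eq_card, ← Subgroup.index_eq_card, hKdef, Subgroup.index_map,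
            Subgroup.ker_subtype, sup_bot_eq, Subgroup.range_subtype, Subgroup.index_top,
            mul_one]
        have hqG : IsPiGroup π₁ (G ⧸ K) := by
          intro p pp hd
          exact hq p pp (hcardq ▸ hd)
        by_cases hpp : π₁ = π₀
        · rw [hpp] at hqG
          have hindex1 : (K ⊔ H).index = 1 := by
            by_contra hne
            have hpf : (Nat.minFac ((K ⊔ H).index)).Prime := Nat.minFac_prime hne
            have hdK : Nat.minFac ((K ⊔ H).index) ∣ K.index :=
              (Nat.minFac_dvd _).trans (Subgroup.index_dvd_of_le le_sup_left)
            have hdH : Nat.minFac ((K ⊔ H).index) ∣ H.index :=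
              (Nat.minFac_dvd _).trans (Subgroup.index_dvd_of_le le_sup_right)
            have hin : Nat.minFac ((K ⊔ H).index) ∈ π₀ := by
              apply hqG _ hpf
              rwa [← Subgroup.index_eq_card]
            exact hH.2 _ hpf hdH hin
          have hKH : K ⊔ H = ⊤ := Subgroup.index_eq_one.mp hindex1
          have hAU : A ≤ A ⊔ K := le_sup_left
          have hUM : A ⊔ K ≤ M := sup_le hAle hKM
          have hUtop : A ⊔ K ≠ ⊤ := by
            intro h
            exact hMtop (top_le_iff.mp (h ▸ hUM))
          have hUlt : Nat.card ↥(A ⊔ K) < N :=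
            lt_of_lt_of_le (card_lt_of_ne_top hUtop) hNle
          have hUH : ((A ⊔ K : Subgroup G) : Set G) * (H : Set G) = Set.univ := by
            apply Set.eq_univ_of_univ_subset
            have h1 : (K : Set G) * (H : Set G) = Set.univ := by
              rw [← Subgroup.normal_mul, hKH, Subgroup.coe_top]
            rw [← h1]
            exact Set.mul_subset_mul (fun x hx => (le_sup_right : K ≤ A ⊔ K) hx) subset_rfl
          have hallHU : IsHallPiSubgroup π₀ ((H ⊓ (A ⊔ K)).subgroupOf (A ⊔ K)) := by
            constructor
            · intro p hp hd
              refine hH.1 p hp ?_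
              have e1 : Nat.card ↥((H ⊓ (A ⊔ K)).subgroupOf (A ⊔ K)) =
                  Nat.card ↥(H ⊓ (A ⊔ K)) :=
                Nat.card_congr (Subgroup.subgroupOfEquivOfLe inf_le_right).toEquiv
              rw [e1] at hd
              exact hd.trans (Subgroup.card_dvd_of_le inf_le_left)
            · intro p hp hd
              refine hH.2 p hp ?_
              have e3 : (H ⊓ (A ⊔ K)).relIndex (A ⊔ K) = H.relIndex (A ⊔ K) :=
                Subgroup.inf_relIndex_right H (A ⊔ K)
              have e4 : (H.subgroupOf (A ⊔ K)).index = H.index :=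
                index_subgroupOf_of_mul_univ hUH
              have e2 : ((H ⊓ (A ⊔ K)).subgroupOf (A ⊔ K)).index = H.index := e3.trans e4
              rwa [e2] at hd
          have hperm := hrec (A ⊔ K) hAU hUlt _ hallHU
          have hset := permutes_map hAU (inf_le_right : H ⊓ (A ⊔ K) ≤ A ⊔ K) hperm
          apply permutes_of_aux hmod hAU ?_ hset
          rw [hUH]
          exact Set.subset_univ _
        · have hdisj : ∀ p : ℕ, p.Prime → p ∈ π₀ → p ∈ π₁ → False := by
            intro p ppr h0 h1
            simp only [Set.mem_insert_iff, Set.mem_singleton_iff] at hπ₀ hπ₁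
            rcases hπ₀ with h | h <;> rcases hπ₁ with h' | h'
            · exact hpp (h'.trans h.symm)
            · rw [h] at h0; rw [h'] at h1; exact h1.2 h0
            · rw [h] at h0; rw [h'] at h1; exact h0.2 h1
            · exact hpp (h'.trans h.symm)
          have hHK : H ≤ K := by
            have hd2 : Nat.card ↥(H.map (QuotientGroup.mk' K)) ∣ Nat.card ↥H :=
              Subgroup.card_dvd_of_surjective ((QuotientGroup.mk' K).subgroupMap H)
                (MonoidHom.subgroupMap_surjective _ _)
            have hd1 : Nat.card ↥(H.map (QuotientGroup.mk' K)) ∣ Nat.card (G ⧸ K) :=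
              ⟨(H.map (QuotientGroup.mk' K)).index,
                (H.map (QuotientGroup.mk' K)).card_mul_index.symm⟩
            have hone : Nat.card ↥(H.map (QuotientGroup.mk' K)) = 1 := by
              by_contra hne
              have hpf := Nat.minFac_prime hne
              have h0 : Nat.minFac (Nat.card ↥(H.map (QuotientGroup.mk' K))) ∈ π₀ :=
                hH.1 _ hpf ((Nat.minFac_dvd _).trans hd2)
              have h1 : Nat.minFac (Nat.card ↥(H.map (QuotientGroup.mk' K))) ∈ π₁ :=
                hqG _ hpf ((Nat.minFac_dvd _).trans hd1)
              exact hdisj _ hpf h0 h1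
            have hbot : H.map (QuotientGroup.mk' K) = ⊥ := Subgroup.card_eq_one.mp hone
            have hker : H ≤ (QuotientGroup.mk' K).ker := by
              intro x hx
              have hmem : (QuotientGroup.mk' K) x ∈ H.map (QuotientGroup.mk' K) :=
                Subgroup.mem_map_of_mem _ hx
              rw [hbot] at hmem
              exact MonoidHom.mem_ker.mpr (Subgroup.mem_bot.mp hmem)
            rwa [QuotientGroup.ker_mk'] at hker
          have hHM : H ≤ M := hHK.trans hKM
          have hallHM : IsHallPiSubgroup π₀ (H.subgroupOf M) := by
            constructor
            · intro p hp hd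
              refine hH.1 p hp ?_
              have e1 : Nat.card ↥(H.subgroupOf M) = Nat.card ↥H :=
                Nat.card_congr (Subgroup.subgroupOfEquivOfLe hHM).toEquiv
              rwa [e1] at hd
            · intro p hp hd
              refine hH.2 p hp ?_
              have e2 : (H.subgroupOf M).index ∣ H.index :=
                ⟨M.index, (Subgroup.relIndex_mul_index hHM).symm⟩
              exact hd.trans e2
          have hperm := hrec M hAle hltN _ hallHM
          exact permutes_map hAle hHM hperm
termination_by N
decreasing_by
  exact hcardE


/-- Corollary 1.3(i): A modular subgroup with a chain whose
non-normal factors are `π₀`-groups (`π₀ ∈ {π, π'}`) permutes with each Hall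
`π₀`-subgroup of `G`, whenever `G` possesses one. -/
theorem modular_piPiPrime_permutes_hall (π : Set ℕ) (hπ : ∀ p ∈ π, Nat.Prime p)
    {G : Type*} [Group G] [Finite G] (A : Subgroup G)
    (hmod : IsModularSubgroup A) (hchain : IsPiPiPrimeSubnormal π A) :
    ∀ π₀ ∈ ({π, primeCompl π} : Set (Set ℕ)),
      (∃ H : Subgroup G, IsHallPiSubgroup π₀ H) →
        ∀ H : Subgroup G, IsHallPiSubgroup π₀ H → Permutes A H := by
  intro π₀ hπ₀ _hex H hH
  obtain ⟨n, c, hc0, hcl, hstep⟩ := hchain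
  exact permHallAux π hπ (Nat.card G) n G A c le_rfl hmod hc0 hcl hstep π₀ hπ₀ H hH
end

section
/- Let π = {p_1, …, p_n} be a set of primes with complement π′, and let A be a modular subgroup of a finite group G for which there is a chain of subgroups A = A_0 ≤ A_1 ≤ ⋯ ≤ A_n = G such that for each i = 1,…,n either A_{i-1} is normal in A_i or A_i/(A_{i-1})_{A_i} is a π′-group. Then A permutes with every Sylow p-subgroup of G for all p ∈ π, and if G possesses a Hall π′-subgroup, then A permutes with each Hall π′-subgroup of G. -/
open Subgroup Pointwise

section PermHelpers

variable {G : Type*} [Group G]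

theorem my_card_set_mul (A B : Subgroup G) :
    Nat.card (↑A * ↑B : Set G) * Nat.card ↥(A ⊓ B) = Nat.card A * Nat.card B := by
  classical
  rw [← Nat.card_prod, ← Nat.card_prod]
  have hchoice : ∀ x : (↑A * ↑B : Set G), ∃ ab : A × B, (ab.1 : G) * (ab.2 : G) = (x : G) := by
    rintro ⟨x, hx⟩
    obtain ⟨a, ha, b, hb, rfl⟩ := hx
    exact ⟨(⟨a, ha⟩, ⟨b, hb⟩), rfl⟩
  choose f hf using hchoice
  apply Nat.card_congr
  have hAB : ∀ a : A, ∀ b : B, ((a : G) * b ∈ (↑A * ↑B : Set G)) := fun a b =>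
    Set.mul_mem_mul a.2 b.2
  refine Equiv.ofBijective (fun sc =>
        ((f sc.1).1 * ⟨(sc.2 : G), (Subgroup.mem_inf.mp sc.2.2).1⟩,
         (⟨(sc.2 : G), (Subgroup.mem_inf.mp sc.2.2).2⟩ : B)⁻¹ * (f sc.1).2)) ⟨?_, ?_⟩
  · rintro ⟨s, c⟩ ⟨s', c'⟩ h
    have h1 : ((f s).1 : G) * (c : G) = ((f s').1 : G) * (c' : G) :=
      congrArg (Subtype.val) (congrArg Prod.fst h)
    have h2 : (c : G)⁻¹ * ((f s).2 : G) = (c' : G)⁻¹ * ((f s').2 : G) :=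
      congrArg (Subtype.val) (congrArg Prod.snd h)
    have hs : (s : G) = (s' : G) := by
      calc (s : G) = (((f s).1 : G) * c) * ((c : G)⁻¹ * (f s).2) := by
            rw [← hf s]; group
        _ = (((f s').1 : G) * c') * ((c' : G)⁻¹ * (f s').2) := by rw [h1, h2]
        _ = (s' : G) := by rw [← hf s']; group
    have hss : s = s' := Subtype.ext hs
    subst hss
    have hc : (c : G) = (c' : G) := mul_left_cancel h1
    exact Prod.ext rfl (Subtype.ext hc)
  · rintro ⟨a, b⟩
    set t : (↑A * ↑B : Set G) := ⟨(a : G) * (b : G), hAB a b⟩ with ht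
    have h : ((f t).1 : G) * ((f t).2 : G) = (a : G) * (b : G) := hf t
    have hcmem : ((f t).1 : G)⁻¹ * (a : G) ∈ A ⊓ B := by
      rw [Subgroup.mem_inf]
      refine ⟨mul_mem (inv_mem (f t).1.2) a.2, ?_⟩
      have key : ((f t).1 : G)⁻¹ * (a : G) = ((f t).2 : G) * (b : G)⁻¹ := by
        calc ((f t).1 : G)⁻¹ * a = ((f t).1 : G)⁻¹ * ((a : G) * b) * (b : G)⁻¹ := by group
          _ = ((f t).1 : G)⁻¹ * (((f t).1 : G) * (f t).2) * (b : G)⁻¹ := by rw [h]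
          _ = ((f t).2 : G) * (b : G)⁻¹ := by group
      rw [key]; exact mul_mem (f t).2.2 (inv_mem b.2)
    refine ⟨(t, ⟨((f t).1 : G)⁻¹ * (a : G), hcmem⟩), ?_⟩
    refine Prod.ext (Subtype.ext ?_) (Subtype.ext ?_)
    · show ((f t).1 : G) * (((f t).1 : G)⁻¹ * (a : G)) = (a : G)
      group
    · show (((f t).1 : G)⁻¹ * (a : G))⁻¹ * ((f t).2 : G) = (b : G)
      calc (((f t).1 : G)⁻¹ * a)⁻¹ * ((f t).2 : G)
          = (a : G)⁻¹ * (((f t).1 : G) * (f t).2) := by group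
        _ = (a : G)⁻¹ * ((a : G) * b) := by rw [h]
        _ = (b : G) := by group

theorem my_mul_absorb_right {B A : Subgroup G} (h : B ≤ A) : (A : Set G) * (B : Set G) = A := by
  apply Set.Subset.antisymm
  · rintro x ⟨a, ha, b, hb, rfl⟩; exact mul_mem ha (h hb)
  · intro x hx; exact ⟨x, hx, 1, one_mem _, mul_one x⟩

theorem my_mul_absorb_left {B A : Subgroup G} (h : B ≤ A) : (B : Set G) * (A : Set G) = A := by
  apply Set.Subset.antisymm
  · rintro x ⟨b, hb, a, ha, rfl⟩; exact mul_mem (h hb) ha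
  · intro x hx; exact ⟨1, one_mem _, x, hx, one_mul x⟩

/-- If the set products commute, the product is the join. -/
theorem my_coe_sup_of_comm {A B : Subgroup G}
    (h : (A : Set G) * (B : Set G) = (B : Set G) * (A : Set G)) :
    ((A ⊔ B : Subgroup G) : Set G) = (A : Set G) * (B : Set G) := by
  refine Set.Subset.antisymm ?_ ?_
  · have honem : (1 : G) ∈ (A : Set G) * (B : Set G) := ⟨1, one_mem _, 1, one_mem _, one_mul 1⟩
    have hmul : ∀ x y : G, x ∈ (A : Set G) * (B : Set G) → y ∈ (A : Set G) * (B : Set G) →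
        x * y ∈ (A : Set G) * (B : Set G) := by
      rintro _ _ ⟨a, ha, b, hb, rfl⟩ ⟨a', ha', b', hb', rfl⟩
      have hba : (b : G) * a' ∈ (A : Set G) * (B : Set G) := by
        rw [h]; exact ⟨b, hb, a', ha', rfl⟩
      obtain ⟨a'', ha'', b'', hb'', he0⟩ := hba
      have he : a'' * b'' = b * a' := he0
      refine ⟨a * a'', mul_mem ha ha'', b'' * b', mul_mem hb'' hb', ?_⟩
      calc a * a'' * (b'' * b') = a * (a'' * b'') * b' := by group
        _ = a * (b * a') * b' := by rw [he]
        _ = a * b * (a' * b') := by group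
    have hinv : ∀ x : G, x ∈ (A : Set G) * (B : Set G) → x⁻¹ ∈ (A : Set G) * (B : Set G) := by
      rintro _ ⟨a, ha, b, hb, rfl⟩
      have hmem : (b : G)⁻¹ * a⁻¹ ∈ (B : Set G) * (A : Set G) :=
        ⟨b⁻¹, inv_mem hb, a⁻¹, inv_mem ha, rfl⟩
      rw [← h] at hmem
      simpa [mul_inv_rev] using hmem
    let S : Subgroup G :=
      { carrier := (A : Set G) * (B : Set G),
        one_mem' := honem,
        mul_mem' := fun hx hy => hmul _ _ hx hy,
        inv_mem' := fun hx => hinv _ hx }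
    have hAS : A ≤ S := fun a ha => ⟨a, ha, 1, one_mem _, mul_one a⟩
    have hBS : B ≤ S := fun b hb => ⟨1, one_mem _, b, hb, one_mul b⟩
    exact fun x hx => (sup_le hAS hBS) hx
  · rw [sup_eq_closure_mul]; exact Subgroup.subset_closure

/-- If `N` is invariant under conjugation by `P`, the products commute. -/
theorem my_comm_of_conj {N P : Subgroup G} (h : ∀ p ∈ P, ∀ n ∈ N, p * n * p⁻¹ ∈ N) :
    (N : Set G) * (P : Set G) = (P : Set G) * (N : Set G) := by
  apply Set.Subset.antisymm
  · rintro _ ⟨n, hn, p, hp, rfl⟩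
    refine ⟨p, hp, p⁻¹ * n * p, by simpa using h p⁻¹ (inv_mem hp) n hn, by group⟩
  · rintro _ ⟨p, hp, n, hn, rfl⟩
    refine ⟨p * n * p⁻¹, h p hp n hn, p, hp, by group⟩

theorem my_coe_sup_of_conj {N P : Subgroup G} (h : ∀ p ∈ P, ∀ n ∈ N, p * n * p⁻¹ ∈ N) :
    ((N ⊔ P : Subgroup G) : Set G) = (N : Set G) * (P : Set G) :=
  my_coe_sup_of_comm (my_comm_of_conj h)

theorem my_relindex_mul_card_inf [Finite G] (A T : Subgroup G) :
    A.relIndex T * Nat.card ↥(A ⊓ T) = Nat.card T := by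
  have h1 : A.relIndex T = ((A ⊓ T).subgroupOf T).index := by
    rw [Subgroup.inf_subgroupOf_right]; rfl
  have h2 : Nat.card ((A ⊓ T).subgroupOf T) = Nat.card ↥(A ⊓ T) :=
    Nat.card_congr (Subgroup.subgroupOfEquivOfLe inf_le_right).toEquiv
  rw [h1, ← h2]
  exact Subgroup.index_mul_card _

theorem my_relindex_pos [Finite G] (A T : Subgroup G) : 0 < A.relIndex T :=
  Nat.pos_of_ne_zero (Subgroup.index_ne_zero_of_finite)

theorem my_card_pos [Finite G] (A : Subgroup G) : 0 < Nat.card A := Nat.card_pos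

/-- If `D` is invariant under conjugation by `T` and `D, H ≤ T` then
`D.relIndex H ∣ D.relIndex T`. -/
theorem my_relindex_dvd_of_conj [Finite G] {D H T : Subgroup G} (hD : D ≤ T) (hH : H ≤ T)
    (hconj : ∀ t ∈ T, ∀ d ∈ D, t * d * t⁻¹ ∈ D) :
    D.relIndex H ∣ D.relIndex T := by
  set S := D ⊔ H with hS
  have hcoe : ((S : Subgroup G) : Set G) = (D : Set G) * (H : Set G) :=
    my_coe_sup_of_conj (fun h hh d hd => hconj h (hH hh) d hd)
  have hcards : Nat.card S * Nat.card ↥(D ⊓ H) = Nat.card D * Nat.card H := by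
    rw [← my_card_set_mul D H, ← hcoe]; rfl
  have hx : D.relIndex H * Nat.card ↥(D ⊓ H) = Nat.card H := my_relindex_mul_card_inf D H
  have hz : D.relIndex S * Nat.card D = Nat.card S := by
    have := my_relindex_mul_card_inf D S
    rwa [inf_of_le_left (le_sup_left : D ≤ S)] at this
  have hxz : D.relIndex H = D.relIndex S := by
    have hpos : 0 < Nat.card D * Nat.card ↥(D ⊓ H) :=
      Nat.mul_pos (my_card_pos D) (my_card_pos _)
    apply Nat.eq_of_mul_eq_mul_right hpos
    calc D.relIndex H * (Nat.card D * Nat.card ↥(D ⊓ H))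
        = (D.relIndex H * Nat.card ↥(D ⊓ H)) * Nat.card D := by ring
      _ = Nat.card H * Nat.card D := by rw [hx]
      _ = Nat.card S * Nat.card ↥(D ⊓ H) := by rw [mul_comm]; exact hcards.symm
      _ = (D.relIndex S * Nat.card D) * Nat.card ↥(D ⊓ H) := by rw [hz]
      _ = D.relIndex S * (Nat.card D * Nat.card ↥(D ⊓ H)) := by ring
  rw [hxz]
  exact ⟨S.relIndex T, (Subgroup.relIndex_mul_relIndex D S T le_sup_left (sup_le hD hH)).symm⟩

/-- Subgroups with coprime relative indices in `T` cover `T` with their product. -/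
theorem my_coprime_cover [Finite G] {U V T : Subgroup G} (hU : U ≤ T) (hV : V ≤ T)
    (h : Nat.Coprime (U.relIndex T) (V.relIndex T)) :
    (U : Set G) * (V : Set G) = (T : Set G) := by
  have hdvd : U.relIndex T * V.relIndex T ∣ (U ⊓ V).relIndex T :=
    Nat.Coprime.mul_dvd_of_dvd_of_dvd h
      (Subgroup.relIndex_dvd_of_le_left T inf_le_left)
      (Subgroup.relIndex_dvd_of_le_left T inf_le_right)
  have hle : (U ⊓ V).relIndex T ≤ U.relIndex T * V.relIndex T := Subgroup.relIndex_inf_le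
  have hr : (U ⊓ V).relIndex T = U.relIndex T * V.relIndex T :=
    Nat.le_antisymm hle (Nat.le_of_dvd (my_relindex_pos _ _) hdvd)
  have ha : U.relIndex T * Nat.card U = Nat.card T := by
    have := my_relindex_mul_card_inf U T; rwa [inf_of_le_left hU] at this
  have hb : V.relIndex T * Nat.card V = Nat.card T := by
    have := my_relindex_mul_card_inf V T; rwa [inf_of_le_left hV] at this
  have hc : (U ⊓ V).relIndex T * Nat.card ↥(U ⊓ V) = Nat.card T := by
    have := my_relindex_mul_card_inf (U ⊓ V) T
    rwa [inf_of_le_left (le_trans inf_le_left hU)] at this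
  have hs := my_card_set_mul U V
  have hcardeq : Nat.card (↑U * ↑V : Set G) = Nat.card T := by
    have hk : 0 < Nat.card ↥(U ⊓ V) * (U.relIndex T * V.relIndex T) :=
      Nat.mul_pos (my_card_pos _) (Nat.mul_pos (my_relindex_pos _ _) (my_relindex_pos _ _))
    apply Nat.eq_of_mul_eq_mul_right hk
    calc Nat.card (↑U * ↑V : Set G) * (Nat.card ↥(U ⊓ V) * (U.relIndex T * V.relIndex T))
        = (Nat.card (↑U * ↑V : Set G) * Nat.card ↥(U ⊓ V)) * (U.relIndex T * V.relIndex T) := by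
          ring
      _ = (Nat.card U * Nat.card V) * (U.relIndex T * V.relIndex T) := by rw [hs]
      _ = (U.relIndex T * Nat.card U) * (V.relIndex T * Nat.card V) := by ring
      _ = Nat.card T * Nat.card T := by rw [ha, hb]
      _ = ((U ⊓ V).relIndex T * Nat.card ↥(U ⊓ V)) * Nat.card T := by rw [hc]
      _ = Nat.card T * (Nat.card ↥(U ⊓ V) * (U.relIndex T * V.relIndex T)) := by rw [hr]; ring
  have hsubset : (↑U * ↑V : Set G) ⊆ (T : Set G) := by
    rintro _ ⟨u, hu, v, hv, rfl⟩; exact mul_mem (hU hu) (hV hv)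
  have hfin : (T : Set G).Finite := Set.toFinite _
  apply Set.eq_of_subset_of_ncard_le hsubset ?_ hfin
  rw [← Nat.card_coe_set_eq, ← Nat.card_coe_set_eq, hcardeq]
  exact le_of_eq (by rfl)

theorem my_subgroupOf_normal_iff {X Y : Subgroup G} (hXY : X ≤ Y) :
    (X.subgroupOf Y).Normal ↔ ∀ g ∈ Y, ∀ x ∈ X, g * x * g⁻¹ ∈ X := by
  constructor
  · intro hn g hg x hx
    have := hn.conj_mem ⟨x, hXY hx⟩ (by simpa [Subgroup.mem_subgroupOf] using hx) ⟨g, hg⟩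
    simpa [Subgroup.mem_subgroupOf] using this
  · intro h
    constructor
    rintro ⟨x, hxY⟩ hx ⟨g, hg⟩
    simp only [Subgroup.mem_subgroupOf] at hx ⊢
    exact h g hg x hx

theorem my_pigroup_dvd {π₀ : Set ℕ} {X Y : Type*} (h : IsPiGroup π₀ Y)
    (hd : Nat.card X ∣ Nat.card Y) : IsPiGroup π₀ X :=
  fun p hp hpd => h p hp (hpd.trans hd)

theorem my_coprime_of_pi {π₀ : Set ℕ} {a b : ℕ}
    (hA : ∀ q : ℕ, q.Prime → q ∣ a → q ∈ π₀) (hB : ∀ q : ℕ, q.Prime → q ∣ b → q ∉ π₀) :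
    Nat.Coprime a b := by
  by_contra hcon
  obtain ⟨q, hq, hqd⟩ := Nat.exists_prime_and_dvd hcon
  exact hB q hq (hqd.trans (Nat.gcd_dvd_right a b)) (hA q hq (hqd.trans (Nat.gcd_dvd_left a b)))

/-- Chain monotonicity from the origin. -/
theorem my_chain_le {n : ℕ} {c : Fin (n + 1) → Subgroup G}
    (h : ∀ i : Fin n, c i.castSucc ≤ c i.succ) :
    ∀ m : ℕ, (hm : m ≤ n) → c 0 ≤ c ⟨m, Nat.lt_succ_of_le hm⟩ := by
  intro m
  induction m with
  | zero => intro _; exact le_refl _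
  | succ k ih =>
    intro hm
    have hk : k ≤ n := Nat.le_of_succ_le hm
    refine (ih hk).trans ?_
    have := h ⟨k, hm⟩
    simpa [Fin.castSucc, Fin.succ] using this

theorem my_step_inter [Finite G] {π₀ : Set ℕ} {X Y : Subgroup G} (hXY : X ≤ Y)
    (hd : (X.subgroupOf Y).Normal ∨ IsPiGroup π₀ (↥Y ⧸ (X.subgroupOf Y).normalCore))
    (H : Subgroup G) :
    X ⊓ H ≤ Y ⊓ H ∧
    (((X ⊓ H).subgroupOf (Y ⊓ H)).Normal ∨
      IsPiGroup π₀ (↥(Y ⊓ H) ⧸ ((X ⊓ H).subgroupOf (Y ⊓ H)).normalCore)) := by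
  have hle : X ⊓ H ≤ Y ⊓ H := inf_le_inf_right H hXY
  refine ⟨hle, ?_⟩
  rcases hd with hnorm | hpi
  · left
    rw [my_subgroupOf_normal_iff hle]
    rw [my_subgroupOf_normal_iff hXY] at hnorm
    intro g hg x hx
    obtain ⟨hgY, hgH⟩ := Subgroup.mem_inf.mp hg
    obtain ⟨hxX, hxH⟩ := Subgroup.mem_inf.mp hx
    exact Subgroup.mem_inf.mpr ⟨hnorm g hgY x hxX, mul_mem (mul_mem hgH hxH) (inv_mem hgH)⟩
  · right
    set K : Subgroup ↥Y := (X.subgroupOf Y).normalCore with hK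
    set K₀ : Subgroup G := K.map Y.subtype with hK₀
    have hK₀X : K₀ ≤ X := by
      have h1 : K ≤ X.subgroupOf Y := Subgroup.normalCore_le _
      have h2 : K₀ ≤ (X.subgroupOf Y).map Y.subtype := Subgroup.map_mono h1
      rwa [Subgroup.subgroupOf_map_subtype, inf_of_le_left hXY] at h2
    have hK₀Y : K₀ ≤ Y := Subgroup.map_subtype_le K
    have hconj : ∀ g ∈ Y, ∀ k ∈ K₀, g * k * g⁻¹ ∈ K₀ := by
      rintro g hg _ ⟨k, hk, rfl⟩
      have := (Subgroup.normalCore_normal (X.subgroupOf Y)).conj_mem k hk ⟨g, hg⟩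
      exact ⟨_, this, rfl⟩
    set L : Subgroup ↥(Y ⊓ H) := (X ⊓ H).subgroupOf (Y ⊓ H) with hL
    set M : Subgroup ↥(Y ⊓ H) := (K₀ ⊓ H).subgroupOf (Y ⊓ H) with hM
    have hML : M ≤ L := Subgroup.comap_mono (inf_le_inf_right H hK₀X)
    have hMnorm : M.Normal := by
      rw [my_subgroupOf_normal_iff (inf_le_inf_right H hK₀Y)]
      intro g hg k hk
      obtain ⟨hgY, hgH⟩ := Subgroup.mem_inf.mp hg
      obtain ⟨hkK, hkH⟩ := Subgroup.mem_inf.mp hk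
      exact Subgroup.mem_inf.mpr ⟨hconj g hgY k hkK, mul_mem (mul_mem hgH hkH) (inv_mem hgH)⟩
    have hMcore : M ≤ L.normalCore := by
      haveI := hMnorm
      exact Subgroup.normal_le_normalCore.mpr hML
    have hdvd1 : L.normalCore.index ∣ M.index := Subgroup.index_dvd_of_le hMcore
    have hMeq : M = K₀.subgroupOf (Y ⊓ H) := by
      ext x
      simp only [Subgroup.mem_subgroupOf, Subgroup.mem_inf]
      exact ⟨fun h => h.1, fun h => ⟨h, x.2.2⟩⟩
    have hdvd2 : K₀.relIndex (Y ⊓ H) ∣ K₀.relIndex Y :=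
      my_relindex_dvd_of_conj hK₀Y inf_le_left hconj
    have heq3 : K₀.relIndex Y = K.index := by
      have : K₀.subgroupOf Y = K :=
        Subgroup.comap_map_eq_self_of_injective Y.subtype_injective K
      rw [Subgroup.relIndex, this]
    have e2 : M.index = K₀.relIndex (Y ⊓ H) := by rw [hMeq]; rfl
    have hfinal : Nat.card (↥(Y ⊓ H) ⧸ L.normalCore) ∣ Nat.card (↥Y ⧸ K) := by
      show L.normalCore.index ∣ K.index
      calc L.normalCore.index ∣ M.index := hdvd1
        _ = K₀.relIndex (Y ⊓ H) := e2
        _ ∣ K₀.relIndex Y := hdvd2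
        _ = K.index := heq3
    exact my_pigroup_dvd hpi hfinal

end PermHelpers
section KeyLemmas

variable {G : Type*} [Group G]

/-- A relative chain from `A` to `T` whose non-normal factors are `π'`-quotients. -/
def MyGoodChain (π : Set ℕ) {G : Type*} [Group G] (A T : Subgroup G) {n : ℕ}
    (c : Fin (n + 1) → Subgroup G) : Prop :=
  c 0 = A ∧ c (Fin.last n) = T ∧
    ∀ i : Fin n,
      c i.castSucc ≤ c i.succ ∧
        (((c i.castSucc).subgroupOf (c i.succ)).Normal ∨
          IsPiGroup (primeCompl π)
            (c i.succ ⧸ ((c i.castSucc).subgroupOf (c i.succ)).normalCore))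

theorem my_key_sylow (π : Set ℕ) [Finite G] :
    ∀ (n : ℕ) (A T : Subgroup G) (c : Fin (n + 1) → Subgroup G),
      MyGoodChain π A T c → IsModularSubgroup A →
      ∀ p : ℕ, p.Prime → p ∈ π → ∀ P : Subgroup G, IsPGroup p P → P ≤ T →
      ¬ p ∣ P.relIndex T → Permutes A P := by
  intro n
  induction n with
  | zero =>
    intro A T c hc hmod p hp hpπ P hPgrp hPT hrel
    have hAT : A = T := by rw [← hc.1, ← hc.2.1]; rfl
    have hPA : P ≤ A := hAT ▸ hPT
    show (A : Set G) * (P : Set G) = (P : Set G) * (A : Set G)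
    rw [my_mul_absorb_right hPA, my_mul_absorb_left hPA]
  | succ n IH =>
    intro A T c hc hmod p hp hpπ P hPgrp hPT hrel
    obtain ⟨hc0, hclast, hstep⟩ := hc
    haveI : Fact p.Prime := ⟨hp⟩
    set B := c (Fin.last n).castSucc with hBdef
    have hlaststep := hstep (Fin.last n)
    rw [Fin.succ_last, hclast] at hlaststep
    obtain ⟨hBT, hdisj⟩ := hlaststep
    have hAB : A ≤ B := by
      rw [← hc0]
      have h := my_chain_le (fun i => (hstep i).1) n (Nat.le_succ n)
      have hidx : (⟨n, Nat.lt_succ_of_le (Nat.le_succ n)⟩ : Fin (n + 2)) =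
          (Fin.last n).castSucc := rfl
      rwa [hidx] at h
    have hAT : A ≤ T := hAB.trans hBT
    have htrunc : MyGoodChain π A B (fun i : Fin (n + 1) => c i.castSucc) := by
      refine ⟨?_, rfl, ?_⟩
      · show c (0 : Fin (n + 1)).castSucc = A
        rw [Fin.castSucc_zero]; exact hc0
      · intro i
        have h := hstep i.castSucc
        rw [Fin.succ_castSucc] at h
        exact h
    rcases hdisj with hnorm | hpi
    · -- last factor normal
      have hconjB : ∀ g ∈ T, ∀ b ∈ B, g * b * g⁻¹ ∈ B :=
        (my_subgroupOf_normal_iff hBT).1 hnorm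
      set H := A ⊔ P with hHdef
      have hPH : P ≤ H := le_sup_right
      have hAH : A ≤ H := le_sup_left
      have hHT : H ≤ T := sup_le hAT hPT
      set N := B ⊓ H with hNdef
      have hAN : A ≤ N := le_inf hAB hAH
      have hNH : N ≤ H := inf_le_right
      have hconjNP : ∀ q ∈ P, ∀ z ∈ N, q * z * q⁻¹ ∈ N := by
        intro q hq z hz
        obtain ⟨hzB, hzH⟩ := Subgroup.mem_inf.mp hz
        exact Subgroup.mem_inf.mpr ⟨hconjB q (hPT hq) z hzB,
          mul_mem (mul_mem (hPH hq) hzH) (inv_mem (hPH hq))⟩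
      have hNSup : N ⊔ P = H := by
        apply le_antisymm (sup_le hNH hPH)
        exact sup_le (hAN.trans le_sup_left) le_sup_right
      have hHset : (H : Set G) = (N : Set G) * (P : Set G) := by
        rw [← hNSup]; exact my_coe_sup_of_conj hconjNP
      have hPNset : (N : Set G) * (P : Set G) = (P : Set G) * (N : Set G) :=
        my_comm_of_conj hconjNP
      have hcards : Nat.card H * Nat.card ↥(N ⊓ P) = Nat.card N * Nat.card P := by
        rw [← my_card_set_mul N P, ← hHset]; rfl
      have hx : (P ⊓ N).relIndex N * Nat.card ↥(P ⊓ N) = Nat.card N := by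
        have := my_relindex_mul_card_inf (P ⊓ N) N
        rwa [inf_of_le_left (inf_le_right : P ⊓ N ≤ N)] at this
      have hy : P.relIndex H * Nat.card P = Nat.card H := by
        have := my_relindex_mul_card_inf P H
        rwa [inf_of_le_left hPH] at this
      have hxy : (P ⊓ N).relIndex N = P.relIndex H := by
        have hpos : 0 < Nat.card ↥(P ⊓ N) * Nat.card P :=
          Nat.mul_pos (my_card_pos _) (my_card_pos _)
        apply Nat.eq_of_mul_eq_mul_right hpos
        calc (P ⊓ N).relIndex N * (Nat.card ↥(P ⊓ N) * Nat.card P)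
            = ((P ⊓ N).relIndex N * Nat.card ↥(P ⊓ N)) * Nat.card P := by ring
          _ = Nat.card N * Nat.card P := by rw [hx]
          _ = Nat.card H * Nat.card ↥(N ⊓ P) := hcards.symm
          _ = (P.relIndex H * Nat.card P) * Nat.card ↥(N ⊓ P) := by rw [hy]
          _ = P.relIndex H * (Nat.card ↥(P ⊓ N) * Nat.card P) := by
              rw [inf_comm N P]; ring
      have hrelPN : ¬ p ∣ (P ⊓ N).relIndex N := by
        rw [hxy]
        intro hdvd
        exact hrel (hdvd.trans
          ⟨H.relIndex T, (Subgroup.relIndex_mul_relIndex P H T hPH hHT).symm⟩)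
      have hchain2 : MyGoodChain π A N (fun i : Fin (n + 1) => c i.castSucc ⊓ H) := by
        refine ⟨?_, rfl, ?_⟩
        · show c (0 : Fin (n + 1)).castSucc ⊓ H = A
          rw [Fin.castSucc_zero, hc0]
          exact inf_of_le_left hAH
        · intro i
          have h := hstep i.castSucc
          rw [Fin.succ_castSucc] at h
          exact my_step_inter h.1 h.2 H
      have hperm := IH A N _ hchain2 hmod p hp hpπ (P ⊓ N) hPgrp.to_inf_left
        inf_le_right hrelPN
      have hsup : A ⊔ (P ⊓ N) = N := by
        rw [hmod.2 P N hAN]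
        exact inf_eq_right.mpr hNH
      have hUset : (A : Set G) * ((P ⊓ N : Subgroup G) : Set G) = (N : Set G) := by
        rw [← my_coe_sup_of_comm hperm, hsup]
      have hUset' : ((P ⊓ N : Subgroup G) : Set G) * (A : Set G) = (N : Set G) := by
        rw [← hperm]; exact hUset
      show (A : Set G) * (P : Set G) = (P : Set G) * (A : Set G)
      calc (A : Set G) * (P : Set G)
          = (A : Set G) * (((P ⊓ N : Subgroup G) : Set G) * (P : Set G)) := by
            rw [my_mul_absorb_left (inf_le_left : P ⊓ N ≤ P)]
        _ = ((A : Set G) * ((P ⊓ N : Subgroup G) : Set G)) * (P : Set G) := by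
            rw [mul_assoc]
        _ = (N : Set G) * (P : Set G) := by rw [hUset]
        _ = (P : Set G) * (N : Set G) := hPNset
        _ = (P : Set G) * (((P ⊓ N : Subgroup G) : Set G) * (A : Set G)) := by rw [hUset']
        _ = ((P : Set G) * ((P ⊓ N : Subgroup G) : Set G)) * (A : Set G) := by
            rw [mul_assoc]
        _ = (P : Set G) * (A : Set G) := by
            rw [my_mul_absorb_right (inf_le_left : P ⊓ N ≤ P)]
    · -- last quotient is a π'-group
      set Q : Subgroup ↥T := (B.subgroupOf T).normalCore with hQdef
      set D : Subgroup G := Q.map T.subtype with hDdef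
      have hDB : D ≤ B := by
        have h1 : Q ≤ B.subgroupOf T := Subgroup.normalCore_le _
        have h2 : D ≤ (B.subgroupOf T).map T.subtype := Subgroup.map_mono h1
        rwa [Subgroup.subgroupOf_map_subtype, inf_of_le_left hBT] at h2
      have hPD : P ≤ D := by
        set φ := QuotientGroup.mk' Q with hφ
        have hP' : IsPGroup p (P.subgroupOf T) :=
          hPgrp.comap_of_injective T.subtype T.subtype_injective
        have hPim : IsPGroup p ((P.subgroupOf T).map φ) := hP'.map φ
        obtain ⟨m, hm⟩ := (IsPGroup.iff_card).1 hPim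
        have hdvd : Nat.card ((P.subgroupOf T).map φ) ∣ Nat.card (↥T ⧸ Q) :=
          Subgroup.card_subgroup_dvd_card _
        have hm0 : m = 0 := by
          by_contra hm0
          have hpd : p ∣ Nat.card ((P.subgroupOf T).map φ) := by
            rw [hm]; exact dvd_pow_self p hm0
          have hpc : p ∈ primeCompl π := hpi p hp (hpd.trans hdvd)
          exact hpc.2 hpπ
        have hbot : (P.subgroupOf T).map φ = ⊥ := by
          rw [← Subgroup.card_eq_one, hm, hm0, pow_zero]
        have hker : P.subgroupOf T ≤ Q := by
          have h := (Subgroup.map_eq_bot_iff _).1 hbot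
          rwa [QuotientGroup.ker_mk'] at h
        intro g hg
        exact ⟨⟨g, hPT hg⟩, hker (by simpa [Subgroup.mem_subgroupOf] using hg), rfl⟩
      have hPB : P ≤ B := hPD.trans hDB
      have hrelB : ¬ p ∣ P.relIndex B := fun hdvd => hrel (hdvd.trans
        ⟨B.relIndex T, (Subgroup.relIndex_mul_relIndex P B T hPB hBT).symm⟩)
      exact IH A B _ htrunc hmod p hp hpπ P hPgrp hPB hrelB

end KeyLemmas
section KeyHall

variable {G : Type*} [Group G]

theorem my_key_hall (π : Set ℕ) [Finite G] :
    ∀ (n : ℕ) (A T : Subgroup G) (c : Fin (n + 1) → Subgroup G),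
      MyGoodChain π A T c → IsModularSubgroup A →
      ∀ H₀ : Subgroup G, IsPiGroup (primeCompl π) H₀ → H₀ ≤ T →
      (∀ q : ℕ, q.Prime → q ∣ H₀.relIndex T → q ∉ primeCompl π) → Permutes A H₀ := by
  intro n
  induction n with
  | zero =>
    intro A T c hc hmod H₀ hH₀pi hH₀T hidx
    have hAT : A = T := by rw [← hc.1, ← hc.2.1]; rfl
    have hPA : H₀ ≤ A := hAT ▸ hH₀T
    show (A : Set G) * (H₀ : Set G) = (H₀ : Set G) * (A : Set G)
    rw [my_mul_absorb_right hPA, my_mul_absorb_left hPA]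
  | succ n IH =>
    intro A T c hc hmod H₀ hH₀pi hH₀T hidx
    obtain ⟨hc0, hclast, hstep⟩ := hc
    set B := c (Fin.last n).castSucc with hBdef
    have hlaststep := hstep (Fin.last n)
    rw [Fin.succ_last, hclast] at hlaststep
    obtain ⟨hBT, hdisj⟩ := hlaststep
    have hAB : A ≤ B := by
      rw [← hc0]
      have h := my_chain_le (fun i => (hstep i).1) n (Nat.le_succ n)
      have hidx2 : (⟨n, Nat.lt_succ_of_le (Nat.le_succ n)⟩ : Fin (n + 2)) =
          (Fin.last n).castSucc := rfl
      rwa [hidx2] at h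
    have hAT : A ≤ T := hAB.trans hBT
    have htrunc : MyGoodChain π A B (fun i : Fin (n + 1) => c i.castSucc) := by
      refine ⟨?_, rfl, ?_⟩
      · show c (0 : Fin (n + 1)).castSucc = A
        rw [Fin.castSucc_zero]; exact hc0
      · intro i
        have h := hstep i.castSucc
        rw [Fin.succ_castSucc] at h
        exact h
    rcases hdisj with hnorm | hpi
    · -- last factor normal
      have hconjB : ∀ g ∈ T, ∀ b ∈ B, g * b * g⁻¹ ∈ B :=
        (my_subgroupOf_normal_iff hBT).1 hnorm
      set H := A ⊔ H₀ with hHdef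
      have hPH : H₀ ≤ H := le_sup_right
      have hAH : A ≤ H := le_sup_left
      have hHT : H ≤ T := sup_le hAT hH₀T
      set N := B ⊓ H with hNdef
      have hAN : A ≤ N := le_inf hAB hAH
      have hNH : N ≤ H := inf_le_right
      have hconjNP : ∀ q ∈ H₀, ∀ z ∈ N, q * z * q⁻¹ ∈ N := by
        intro q hq z hz
        obtain ⟨hzB, hzH⟩ := Subgroup.mem_inf.mp hz
        exact Subgroup.mem_inf.mpr ⟨hconjB q (hH₀T hq) z hzB,
          mul_mem (mul_mem (hPH hq) hzH) (inv_mem (hPH hq))⟩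
      have hNSup : N ⊔ H₀ = H := by
        apply le_antisymm (sup_le hNH hPH)
        exact sup_le (hAN.trans le_sup_left) le_sup_right
      have hHset : (H : Set G) = (N : Set G) * (H₀ : Set G) := by
        rw [← hNSup]; exact my_coe_sup_of_conj hconjNP
      have hPNset : (N : Set G) * (H₀ : Set G) = (H₀ : Set G) * (N : Set G) :=
        my_comm_of_conj hconjNP
      have hcards : Nat.card H * Nat.card ↥(N ⊓ H₀) = Nat.card N * Nat.card H₀ := by
        rw [← my_card_set_mul N H₀, ← hHset]; rfl
      have hx : (H₀ ⊓ N).relIndex N * Nat.card ↥(H₀ ⊓ N) = Nat.card N := by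
        have := my_relindex_mul_card_inf (H₀ ⊓ N) N
        rwa [inf_of_le_left (inf_le_right : H₀ ⊓ N ≤ N)] at this
      have hy : H₀.relIndex H * Nat.card H₀ = Nat.card H := by
        have := my_relindex_mul_card_inf H₀ H
        rwa [inf_of_le_left hPH] at this
      have hxy : (H₀ ⊓ N).relIndex N = H₀.relIndex H := by
        have hpos : 0 < Nat.card ↥(H₀ ⊓ N) * Nat.card H₀ :=
          Nat.mul_pos (my_card_pos _) (my_card_pos _)
        apply Nat.eq_of_mul_eq_mul_right hpos
        calc (H₀ ⊓ N).relIndex N * (Nat.card ↥(H₀ ⊓ N) * Nat.card H₀)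
            = ((H₀ ⊓ N).relIndex N * Nat.card ↥(H₀ ⊓ N)) * Nat.card H₀ := by ring
          _ = Nat.card N * Nat.card H₀ := by rw [hx]
          _ = Nat.card H * Nat.card ↥(N ⊓ H₀) := hcards.symm
          _ = (H₀.relIndex H * Nat.card H₀) * Nat.card ↥(N ⊓ H₀) := by rw [hy]
          _ = H₀.relIndex H * (Nat.card ↥(H₀ ⊓ N) * Nat.card H₀) := by
              rw [inf_comm N H₀]; ring
      have hchain2 : MyGoodChain π A N (fun i : Fin (n + 1) => c i.castSucc ⊓ H) := by
        refine ⟨?_, rfl, ?_⟩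
        · show c (0 : Fin (n + 1)).castSucc ⊓ H = A
          rw [Fin.castSucc_zero, hc0]
          exact inf_of_le_left hAH
        · intro i
          have h := hstep i.castSucc
          rw [Fin.succ_castSucc] at h
          exact my_step_inter h.1 h.2 H
      have hH2pi : IsPiGroup (primeCompl π) ↥(H₀ ⊓ N) :=
        my_pigroup_dvd hH₀pi (Subgroup.card_dvd_of_le inf_le_left)
      have hidx2 : ∀ q : ℕ, q.Prime → q ∣ (H₀ ⊓ N).relIndex N → q ∉ primeCompl π := by
        intro q hq hd
        rw [hxy] at hd
        exact hidx q hq (hd.trans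
          ⟨H.relIndex T, (Subgroup.relIndex_mul_relIndex H₀ H T hPH hHT).symm⟩)
      have hperm := IH A N _ hchain2 hmod (H₀ ⊓ N) hH2pi inf_le_right hidx2
      have hsup : A ⊔ (H₀ ⊓ N) = N := by
        rw [hmod.2 H₀ N hAN]
        exact inf_eq_right.mpr hNH
      have hUset : (A : Set G) * ((H₀ ⊓ N : Subgroup G) : Set G) = (N : Set G) := by
        rw [← my_coe_sup_of_comm hperm, hsup]
      have hUset' : ((H₀ ⊓ N : Subgroup G) : Set G) * (A : Set G) = (N : Set G) := by
        rw [← hperm]; exact hUset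
      show (A : Set G) * (H₀ : Set G) = (H₀ : Set G) * (A : Set G)
      calc (A : Set G) * (H₀ : Set G)
          = (A : Set G) * (((H₀ ⊓ N : Subgroup G) : Set G) * (H₀ : Set G)) := by
            rw [my_mul_absorb_left (inf_le_left : H₀ ⊓ N ≤ H₀)]
        _ = ((A : Set G) * ((H₀ ⊓ N : Subgroup G) : Set G)) * (H₀ : Set G) := by
            rw [mul_assoc]
        _ = (N : Set G) * (H₀ : Set G) := by rw [hUset]
        _ = (H₀ : Set G) * (N : Set G) := hPNset
        _ = (H₀ : Set G) * (((H₀ ⊓ N : Subgroup G) : Set G) * (A : Set G)) := by rw [hUset']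
        _ = ((H₀ : Set G) * ((H₀ ⊓ N : Subgroup G) : Set G)) * (A : Set G) := by
            rw [mul_assoc]
        _ = (H₀ : Set G) * (A : Set G) := by
            rw [my_mul_absorb_right (inf_le_left : H₀ ⊓ N ≤ H₀)]
    · -- last quotient is a π'-group
      set Q : Subgroup ↥T := (B.subgroupOf T).normalCore with hQdef
      set D : Subgroup G := Q.map T.subtype with hDdef
      have hDB : D ≤ B := by
        have h1 : Q ≤ B.subgroupOf T := Subgroup.normalCore_le _
        have h2 : D ≤ (B.subgroupOf T).map T.subtype := Subgroup.map_mono h1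
        rwa [Subgroup.subgroupOf_map_subtype, inf_of_le_left hBT] at h2
      have hDT : D ≤ T := Subgroup.map_subtype_le Q
      have hconjD : ∀ t ∈ T, ∀ d ∈ D, t * d * t⁻¹ ∈ D := by
        rintro t ht _ ⟨k, hk, rfl⟩
        exact ⟨_, (Subgroup.normalCore_normal (B.subgroupOf T)).conj_mem k hk ⟨t, ht⟩, rfl⟩
      have hDrel : D.relIndex T = Nat.card (↥T ⧸ Q) := by
        have h : D.subgroupOf T = Q :=
          Subgroup.comap_map_eq_self_of_injective T.subtype_injective Q
        rw [Subgroup.relIndex, h]; rfl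
      have hDpi : ∀ q : ℕ, q.Prime → q ∣ D.relIndex T → q ∈ primeCompl π := by
        intro q hq hd; rw [hDrel] at hd; exact hpi q hq hd
      have hcop : Nat.Coprime (D.relIndex T) (H₀.relIndex T) :=
        my_coprime_of_pi hDpi hidx
      have hcover : (D : Set G) * (H₀ : Set G) = (T : Set G) :=
        my_coprime_cover hDT hH₀T hcop
      have hH₁B : B ⊓ H₀ ≤ B := inf_le_left
      have hH₁H₀ : B ⊓ H₀ ≤ H₀ := inf_le_right
      have hBset : (B : Set G) = (D : Set G) * ((B ⊓ H₀ : Subgroup G) : Set G) := by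
        apply Set.Subset.antisymm
        · intro b hb
          have hbT : b ∈ (T : Set G) := hBT hb
          rw [← hcover] at hbT
          obtain ⟨d, hd, h, hh, rfl⟩ := hbT
          refine ⟨d, hd, h, Subgroup.mem_inf.mpr ⟨?_, hh⟩, rfl⟩
          have hmem : d⁻¹ * (d * h) ∈ B := mul_mem (inv_mem (hDB hd)) hb
          simpa using hmem
        · rintro _ ⟨d, hd, h, hh, rfl⟩
          exact mul_mem (hDB hd) (hH₁B hh)
      have hDH₁ : D ⊓ (B ⊓ H₀) = D ⊓ H₀ := by
        rw [← inf_assoc, inf_of_le_left hDB]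
      have c1 : Nat.card T * Nat.card ↥(D ⊓ H₀) = Nat.card D * Nat.card H₀ := by
        have h := my_card_set_mul D H₀
        rw [hcover] at h
        exact h
      have c2 : Nat.card B * Nat.card ↥(D ⊓ (B ⊓ H₀)) =
          Nat.card D * Nat.card ↥(B ⊓ H₀) := by
        have h := my_card_set_mul D (B ⊓ H₀)
        rw [← hBset] at h
        exact h
      have hr : (B ⊓ H₀).relIndex B * Nat.card ↥(B ⊓ H₀) = Nat.card B := by
        have := my_relindex_mul_card_inf (B ⊓ H₀) B
        rwa [inf_of_le_left hH₁B] at this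
      have hs : H₀.relIndex T * Nat.card H₀ = Nat.card T := by
        have := my_relindex_mul_card_inf H₀ T
        rwa [inf_of_le_left hH₀T] at this
      have hrs : (B ⊓ H₀).relIndex B = H₀.relIndex T := by
        have hpos : 0 < Nat.card ↥(B ⊓ H₀) * (Nat.card ↥(D ⊓ H₀) * Nat.card H₀) :=
          Nat.mul_pos (my_card_pos _) (Nat.mul_pos (my_card_pos _) (my_card_pos _))
        apply Nat.eq_of_mul_eq_mul_right hpos
        calc (B ⊓ H₀).relIndex B * (Nat.card ↥(B ⊓ H₀) *
              (Nat.card ↥(D ⊓ H₀) * Nat.card H₀))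
            = ((B ⊓ H₀).relIndex B * Nat.card ↥(B ⊓ H₀)) *
              Nat.card ↥(D ⊓ H₀) * Nat.card H₀ := by ring
          _ = Nat.card B * Nat.card ↥(D ⊓ H₀) * Nat.card H₀ := by rw [hr]
          _ = (Nat.card B * Nat.card ↥(D ⊓ (B ⊓ H₀))) * Nat.card H₀ := by rw [hDH₁]
          _ = (Nat.card D * Nat.card ↥(B ⊓ H₀)) * Nat.card H₀ := by rw [c2]
          _ = (Nat.card D * Nat.card H₀) * Nat.card ↥(B ⊓ H₀) := by ring
          _ = (Nat.card T * Nat.card ↥(D ⊓ H₀)) * Nat.card ↥(B ⊓ H₀) := by rw [c1]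
          _ = ((H₀.relIndex T * Nat.card H₀) * Nat.card ↥(D ⊓ H₀)) *
              Nat.card ↥(B ⊓ H₀) := by rw [hs]
          _ = H₀.relIndex T * (Nat.card ↥(B ⊓ H₀) *
              (Nat.card ↥(D ⊓ H₀) * Nat.card H₀)) := by ring
      have hH₁pi : IsPiGroup (primeCompl π) ↥(B ⊓ H₀) :=
        my_pigroup_dvd hH₀pi (Subgroup.card_dvd_of_le hH₁H₀)
      have hidx1 : ∀ q : ℕ, q.Prime → q ∣ (B ⊓ H₀).relIndex B → q ∉ primeCompl π := by
        intro q hq hd; rw [hrs] at hd; exact hidx q hq hd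
      have hperm1 := IH A B _ htrunc hmod (B ⊓ H₀) hH₁pi hH₁B hidx1
      have hUset : ((A ⊔ (B ⊓ H₀) : Subgroup G) : Set G) =
          (A : Set G) * ((B ⊓ H₀ : Subgroup G) : Set G) := my_coe_sup_of_comm hperm1
      have hH0Hs : H₀ ≤ A ⊔ H₀ := le_sup_right
      have hAHs : A ≤ A ⊔ H₀ := le_sup_left
      have hHsT : A ⊔ H₀ ≤ T := sup_le hAT hH₀T
      have hUeq : A ⊔ (B ⊓ H₀) = (A ⊔ H₀) ⊓ B := by
        rw [inf_comm B H₀]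
        exact hmod.2 H₀ B hAB
      have hUHs : A ⊔ (B ⊓ H₀) ≤ A ⊔ H₀ := by rw [hUeq]; exact inf_le_left
      have hDHsU : D ⊓ (A ⊔ H₀) ≤ A ⊔ (B ⊓ H₀) := by
        rw [hUeq]
        exact le_inf inf_le_right ((inf_le_left : D ⊓ (A ⊔ H₀) ≤ D).trans hDB)
      have t1 : H₀.relIndex (A ⊔ H₀) ∣ H₀.relIndex T :=
        ⟨(A ⊔ H₀).relIndex T,
          (Subgroup.relIndex_mul_relIndex H₀ (A ⊔ H₀) T hH0Hs hHsT).symm⟩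
      have t2 : (A ⊔ (B ⊓ H₀)).relIndex (A ⊔ H₀) ∣ (D ⊓ (A ⊔ H₀)).relIndex (A ⊔ H₀) :=
        Dvd.intro_left _
          (Subgroup.relIndex_mul_relIndex (D ⊓ (A ⊔ H₀)) (A ⊔ (B ⊓ H₀)) (A ⊔ H₀)
            hDHsU hUHs)
      have t3 : (D ⊓ (A ⊔ H₀)).relIndex (A ⊔ H₀) = D.relIndex (A ⊔ H₀) :=
        Subgroup.inf_relIndex_right D (A ⊔ H₀)
      have t4 : D.relIndex (A ⊔ H₀) ∣ D.relIndex T :=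
        my_relindex_dvd_of_conj hDT hHsT hconjD
      have hUpi : ∀ q : ℕ, q.Prime → q ∣ (A ⊔ (B ⊓ H₀)).relIndex (A ⊔ H₀) →
          q ∈ primeCompl π := by
        intro q hq hd
        exact hDpi q hq (((hd.trans t2).trans (t3 ▸ dvd_refl _)).trans t4)
      have hH0pi' : ∀ q : ℕ, q.Prime → q ∣ H₀.relIndex (A ⊔ H₀) → q ∉ primeCompl π :=
        fun q hq hd => hidx q hq (hd.trans t1)
      have hcop2 : Nat.Coprime ((A ⊔ (B ⊓ H₀)).relIndex (A ⊔ H₀))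
          (H₀.relIndex (A ⊔ H₀)) := my_coprime_of_pi hUpi hH0pi'
      have hcover2 : ((A ⊔ (B ⊓ H₀) : Subgroup G) : Set G) * (H₀ : Set G) =
          ((A ⊔ H₀ : Subgroup G) : Set G) := my_coprime_cover hUHs hH0Hs hcop2
      have hcover2' : (H₀ : Set G) * ((A ⊔ (B ⊓ H₀) : Subgroup G) : Set G) =
          ((A ⊔ H₀ : Subgroup G) : Set G) := my_coprime_cover hH0Hs hUHs hcop2.symm
      show (A : Set G) * (H₀ : Set G) = (H₀ : Set G) * (A : Set G)
      calc (A : Set G) * (H₀ : Set G)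
          = (A : Set G) * (((B ⊓ H₀ : Subgroup G) : Set G) * (H₀ : Set G)) := by
            rw [my_mul_absorb_left hH₁H₀]
        _ = ((A : Set G) * ((B ⊓ H₀ : Subgroup G) : Set G)) * (H₀ : Set G) := by
            rw [mul_assoc]
        _ = ((A ⊔ (B ⊓ H₀) : Subgroup G) : Set G) * (H₀ : Set G) := by rw [hUset]
        _ = ((A ⊔ H₀ : Subgroup G) : Set G) := hcover2
        _ = (H₀ : Set G) * ((A ⊔ (B ⊓ H₀) : Subgroup G) : Set G) := hcover2'.symm
        _ = (H₀ : Set G) * ((A : Set G) * ((B ⊓ H₀ : Subgroup G) : Set G)) := by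
            rw [hUset]
        _ = (H₀ : Set G) * (((B ⊓ H₀ : Subgroup G) : Set G) * (A : Set G)) := by
            rw [hperm1]
        _ = ((H₀ : Set G) * ((B ⊓ H₀ : Subgroup G) : Set G)) * (A : Set G) := by
            rw [mul_assoc]
        _ = (H₀ : Set G) * (A : Set G) := by rw [my_mul_absorb_right hH₁H₀]

end KeyHall

/-- Corollary 1.4(i): A modular subgroup with a chain whose
non-normal factors are `π'`-groups permutes with every Sylow `p`-subgroup of `G`
for `p ∈ π`, and with every Hall `π'`-subgroup of `G` whenever one exists. -/
theorem modular_piPrime_permutes (π : Set ℕ) (hπ : ∀ p ∈ π, Nat.Prime p)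
    {G : Type*} [Group G] [Finite G] (A : Subgroup G)
    (hmod : IsModularSubgroup A) (hchain : IsPiPrimeSubnormal π A) :
    (∀ p ∈ π, ∀ P : Sylow p G, Permutes A (P : Subgroup G)) ∧
      ((∃ H : Subgroup G, IsHallPiSubgroup (primeCompl π) H) →
        ∀ H : Subgroup G, IsHallPiSubgroup (primeCompl π) H → Permutes A H) := by
  obtain ⟨n, c, hc0, hclast, hstep⟩ := hchain
  constructor
  · intro p hp P
    have hpp := hπ p hp
    haveI : Fact p.Prime := ⟨hpp⟩
    apply my_key_sylow π n A ⊤ c ⟨hc0, hclast, hstep⟩ hmod p hpp hp (P : Subgroup G)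
      P.2 le_top
    rw [Subgroup.relIndex_top_right]
    exact P.not_dvd_index' (my_relindex_pos _ _).ne'
  · rintro - H hH
    apply my_key_hall π n A ⊤ c ⟨hc0, hclast, hstep⟩ hmod H hH.1 le_top
    intro q hq hd
    rw [Subgroup.relIndex_top_right] at hd
    exact hH.2 q hq hd
end

section
/- Let G be a finite group. Then every chief factor of G below the σ-hypercentre Z_σ(G) (i.e., every chief factor H/K of G with H ≤ Z_σ(G)) is σ-central in G. -/
open Subgroup Pointwise

section SigmaAux

variable {G : Type*} [Group G]

theorem mem_sup_of_normal_left {A B : Subgroup G} (hA : A.Normal) {x : G}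
    (hx : x ∈ A ⊔ B) : ∃ a ∈ A, ∃ b ∈ B, x = a * b := by
  haveI := hA
  have hx' : x ∈ ((A ⊔ B : Subgroup G) : Set G) := hx
  rw [Subgroup.normal_mul] at hx'
  obtain ⟨a, ha, b, hb, hab⟩ := hx'
  exact ⟨a, ha, b, hb, hab.symm⟩

theorem dedekind_mod {A B X : Subgroup G} (hA : A.Normal) (hAX : A ≤ X) :
    X ⊓ (A ⊔ B) = A ⊔ (X ⊓ B) := by
  apply le_antisymm
  · intro x hx
    obtain ⟨hxX, hxAB⟩ := Subgroup.mem_inf.mp hx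
    obtain ⟨a, ha, b, hb, rfl⟩ := mem_sup_of_normal_left hA hxAB
    have hbX : b ∈ X := by
      have : a⁻¹ * (a * b) ∈ X := mul_mem (inv_mem (hAX ha)) hxX
      simpa using this
    exact mul_mem ((le_sup_left : A ≤ A ⊔ (X ⊓ B)) ha)
      ((le_sup_right : X ⊓ B ≤ A ⊔ (X ⊓ B)) (Subgroup.mem_inf.mpr ⟨hbX, hb⟩))
  · exact le_inf (sup_le hAX inf_le_left)
      (sup_le le_sup_left (inf_le_right.trans le_sup_right))

theorem mem_quotCentralizer {H K : Subgroup G} (hK : K.Normal) {g : G} :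
    g ∈ quotCentralizer H K hK ↔ ∀ h ∈ H, g⁻¹ * h⁻¹ * g * h ∈ K := by
  haveI := hK
  have hmem : g ∈ quotCentralizer H K hK ↔ (QuotientGroup.mk' K) g ∈
      Subgroup.centralizer ((H.map (QuotientGroup.mk' K) : Subgroup (G ⧸ K)) : Set (G ⧸ K)) :=
    Iff.rfl
  rw [hmem, Subgroup.mem_centralizer_iff]
  constructor
  · intro hg h hh
    have hs : (QuotientGroup.mk' K) h ∈
        ((H.map (QuotientGroup.mk' K) : Subgroup (G ⧸ K)) : Set (G ⧸ K)) :=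
      Subgroup.mem_map_of_mem _ hh
    have h1 := hg _ hs
    have h2 : ((h * g : G) : G ⧸ K) = ((g * h : G) : G ⧸ K) := by
      rw [QuotientGroup.mk_mul, QuotientGroup.mk_mul]
      simpa [QuotientGroup.mk'_apply] using h1
    rw [QuotientGroup.eq] at h2
    rwa [show (h * g)⁻¹ * (g * h) = g⁻¹ * h⁻¹ * g * h from by group] at h2
  · intro hcom s hs
    rw [SetLike.mem_coe, Subgroup.mem_map] at hs
    obtain ⟨h, hh, rfl⟩ := hs
    rw [← map_mul, ← map_mul]
    simp only [QuotientGroup.mk'_apply]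
    rw [QuotientGroup.eq]
    have := hcom h hh
    rwa [show (h * g)⁻¹ * (g * h) = g⁻¹ * h⁻¹ * g * h from by group]

theorem com_mem_of_mem_normal {A : Subgroup G} (hA : A.Normal) (g : G) {x : G} (hx : x ∈ A) :
    g⁻¹ * x⁻¹ * g * x ∈ A := by
  have h1 : g⁻¹ * x⁻¹ * g ∈ A := by
    simpa using hA.conj_mem x⁻¹ (inv_mem hx) g⁻¹
  exact mul_mem h1 hx

theorem com_mul_split (g a b : G) :
    g⁻¹ * (a * b)⁻¹ * g * (a * b) =
      (g⁻¹ * b⁻¹ * g * b) * (b⁻¹ * (g⁻¹ * a⁻¹ * g * a) * b) := by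
  group

theorem com_mul_mem {A : Subgroup G} (hA : A.Normal) {g a b : G}
    (ha : g⁻¹ * a⁻¹ * g * a ∈ A) (hb : g⁻¹ * b⁻¹ * g * b ∈ A) :
    g⁻¹ * (a * b)⁻¹ * g * (a * b) ∈ A := by
  rw [com_mul_split]
  refine mul_mem hb ?_
  simpa using hA.conj_mem _ ha b⁻¹

theorem isSigmaCentral_transfer {I : Type*} {σ : I → Set ℕ} {H K M J : Subgroup G}
    (hK : K.Normal) (hJ : J.Normal)
    (hcard : Nat.card (H ⧸ K.subgroupOf H) = Nat.card (M ⧸ J.subgroupOf M))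
    (hcent : quotCentralizer H K hK = quotCentralizer M J hJ)
    (h : IsSigmaCentral σ M J hJ) : IsSigmaCentral σ H K hK := by
  obtain ⟨i, h1, h2⟩ := h
  refine ⟨i, ?_, ?_⟩
  · intro p pp hdvd
    exact h1 p pp (by rwa [← hcard])
  · intro p pp hdvd
    refine h2 p pp ?_
    have hq : Nat.card (G ⧸ quotCentralizer H K hK) = Nat.card (G ⧸ quotCentralizer M J hJ) := by
      rw [hcent]
    rwa [← hq]

theorem sup_sigmaHypercentral {I : Type*} {σ : I → Set ℕ}
    {E N : Subgroup G} (hE : IsSigmaHypercentral σ E) (hN : IsSigmaHypercentral σ N) :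
    IsSigmaHypercentral σ (E ⊔ N) := by
  obtain ⟨hEn, hE2⟩ := hE
  obtain ⟨hNn, hN2⟩ := hN
  haveI := hEn; haveI := hNn
  refine ⟨Subgroup.sup_normal E N, Or.inr ?_⟩
  intro H K hc hle
  obtain ⟨hKn, hHn, hKH, hmax⟩ := hc
  haveI := hKn; haveI := hHn
  by_cases hcase : H ≤ K ⊔ E
  · -- Case 1 : H ≤ KE, use E
    have hDn : (H ⊓ E).Normal := Subgroup.normal_inf_normal H E
    have hK'n : (K ⊓ E).Normal := Subgroup.normal_inf_normal K E
    have hHdec : H = K ⊔ (H ⊓ E) := by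
      have hd := dedekind_mod (A := K) (B := E) (X := H) hKn hKH.le
      rwa [inf_eq_left.mpr hcase] at hd
    have hDK : ¬ H ⊓ E ≤ K := by
      intro h
      have : H = K := by rw [hHdec, sup_eq_left.mpr h]
      exact hKH.ne this.symm
    have hK'D : K ⊓ E < H ⊓ E := by
      refine lt_of_le_of_ne (inf_le_inf_right E hKH.le) ?_
      intro h
      exact hDK (h ▸ (inf_le_left : K ⊓ E ≤ K))
    have hDKinf : (H ⊓ E) ⊓ K = K ⊓ E := by
      rw [inf_right_comm, inf_eq_right.mpr hKH.le]
    have hchief : IsChiefFactor (H ⊓ E) (K ⊓ E) := by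
      refine ⟨hK'n, hDn, hK'D, ?_⟩
      intro L hLn hK'L hLD
      rcases hmax (K ⊔ L) (Subgroup.sup_normal K L) le_sup_left
        (by rw [hHdec]; exact sup_le_sup_left hLD K) with h | h
      · left
        have hLK : L ≤ K := le_sup_right.trans h.le
        exact le_antisymm (le_inf hLK (hLD.trans inf_le_right)) hK'L
      · right
        have hd := dedekind_mod (A := L) (B := K) (X := H ⊓ E) hLn hLD
        rw [sup_comm L K, h, inf_eq_left.mpr (inf_le_left : H ⊓ E ≤ H), hDKinf] at hd
        rw [hd, sup_eq_left.mpr hK'L]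
    have hSC : IsSigmaCentral σ (H ⊓ E) (K ⊓ E) hchief.1 := by
      rcases hE2 with hbot | hall
      · exact absurd (((inf_le_right : H ⊓ E ≤ E).trans hbot.le).trans bot_le) hDK
      · exact hall (H ⊓ E) (K ⊓ E) hchief inf_le_right
    have hcent : quotCentralizer H K hKn = quotCentralizer (H ⊓ E) (K ⊓ E) hchief.1 := by
      ext g
      rw [mem_quotCentralizer, mem_quotCentralizer]
      constructor
      · intro hg x hx
        obtain ⟨hxH, hxE⟩ := Subgroup.mem_inf.mp hx
        exact Subgroup.mem_inf.mpr ⟨hg x hxH, com_mem_of_mem_normal hEn g hxE⟩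
      · intro hg h hh
        rw [hHdec] at hh
        obtain ⟨a, ha, b, hb, rfl⟩ := mem_sup_of_normal_left hKn hh
        exact com_mul_mem hKn (com_mem_of_mem_normal hKn g ha)
          ((inf_le_left : K ⊓ E ≤ K) (hg b hb))
    have hsub1 : K.subgroupOf (H ⊓ E) = (K ⊓ E).subgroupOf (H ⊓ E) := by
      ext x
      simp only [Subgroup.mem_subgroupOf]
      constructor
      · intro h
        exact Subgroup.mem_inf.mpr ⟨h, (Subgroup.mem_inf.mp x.2).2⟩
      · intro h
        exact (Subgroup.mem_inf.mp h).1
    have hDsupK : (H ⊓ E) ⊔ K = H := by rw [sup_comm]; exact hHdec.symm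
    have hcard : Nat.card (H ⧸ K.subgroupOf H) =
        Nat.card ((↥(H ⊓ E)) ⧸ (K ⊓ E).subgroupOf (H ⊓ E)) := by
      have h1 : Nat.card ((↥(H ⊓ E)) ⧸ K.subgroupOf (H ⊓ E)) =
          Nat.card ((↥((H ⊓ E) ⊔ K)) ⧸ K.subgroupOf ((H ⊓ E) ⊔ K)) :=
        Nat.card_congr (QuotientGroup.quotientInfEquivProdNormalQuotient (H ⊓ E) K).toEquiv
      rw [hDsupK, hsub1] at h1
      exact h1.symm
    exact isSigmaCentral_transfer hKn hchief.1 hcard hcent hSC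
  · -- Case 2 : H ⊓ (K ⊔ E) = K, use N
    have hJn : (K ⊔ E).Normal := Subgroup.sup_normal K E
    haveI := hJn
    have hPn : (H ⊔ (K ⊔ E)).Normal := Subgroup.sup_normal H (K ⊔ E)
    have hMn : ((H ⊔ (K ⊔ E)) ⊓ N).Normal := Subgroup.normal_inf_normal _ N
    have hKJ : K ≤ K ⊔ E := le_sup_left
    have hHJK : H ⊓ (K ⊔ E) = K := by
      rcases hmax (H ⊓ (K ⊔ E)) (Subgroup.normal_inf_normal H (K ⊔ E))
        (le_inf hKH.le hKJ) inf_le_left with h | h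
      · exact h
      · exact absurd (inf_eq_left.mp h) hcase
    have hPJN : H ⊔ (K ⊔ E) ≤ (K ⊔ E) ⊔ N :=
      sup_le (hle.trans (sup_le_sup_right le_sup_right N)) le_sup_left
    have hPdec : H ⊔ (K ⊔ E) = (K ⊔ E) ⊔ ((H ⊔ (K ⊔ E)) ⊓ N) := by
      have hd := dedekind_mod (A := K ⊔ E) (B := N) (X := H ⊔ (K ⊔ E)) hJn le_sup_right
      rwa [inf_eq_left.mpr hPJN] at hd
    have hMJ : ¬ (H ⊔ (K ⊔ E)) ⊓ N ≤ K ⊔ E := by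
      intro h
      refine hcase (le_trans (le_sup_left : H ≤ H ⊔ (K ⊔ E)) ?_)
      rw [hPdec, sup_eq_left.mpr h]
    have hPJmax : ∀ L : Subgroup G, L.Normal → K ⊔ E ≤ L → L ≤ H ⊔ (K ⊔ E) →
        L = K ⊔ E ∨ L = H ⊔ (K ⊔ E) := by
      intro L hLn hJL hLP
      rcases hmax (L ⊓ H) (Subgroup.normal_inf_normal L H) (le_inf (hKJ.trans hJL) hKH.le)
        inf_le_right with h | h
      · left
        have hd := dedekind_mod (A := K ⊔ E) (B := H) (X := L) hJn hJL
        rw [h, sup_eq_left.mpr hKJ, sup_comm (K ⊔ E) H, inf_eq_left.mpr hLP] at hd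
        exact hd
      · right
        exact le_antisymm hLP (sup_le (inf_eq_right.mp h) hJL)
    have hMJlt : ((H ⊔ (K ⊔ E)) ⊓ N) ⊓ (K ⊔ E) < (H ⊔ (K ⊔ E)) ⊓ N := by
      refine lt_of_le_of_ne inf_le_left ?_
      intro h
      exact hMJ (by rw [← h]; exact inf_le_right)
    have hchief : IsChiefFactor ((H ⊔ (K ⊔ E)) ⊓ N) (((H ⊔ (K ⊔ E)) ⊓ N) ⊓ (K ⊔ E)) := by
      refine ⟨Subgroup.normal_inf_normal _ _, hMn, hMJlt, ?_⟩
      intro L hLn h1 h2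
      rcases hPJmax (L ⊔ (K ⊔ E)) (Subgroup.sup_normal L (K ⊔ E)) le_sup_right
        (sup_le (h2.trans inf_le_left) le_sup_right) with h | h
      · left
        have hLJ : L ≤ K ⊔ E := le_sup_left.trans h.le
        exact le_antisymm (le_inf h2 hLJ) h1
      · right
        have hd := dedekind_mod (A := L) (B := K ⊔ E) (X := (H ⊔ (K ⊔ E)) ⊓ N) hLn h2
        rw [h, inf_eq_left.mpr (inf_le_left : (H ⊔ (K ⊔ E)) ⊓ N ≤ H ⊔ (K ⊔ E)),
          sup_eq_left.mpr h1] at hd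
        exact hd.symm
    have hSC : IsSigmaCentral σ ((H ⊔ (K ⊔ E)) ⊓ N) (((H ⊔ (K ⊔ E)) ⊓ N) ⊓ (K ⊔ E))
        hchief.1 := by
      rcases hN2 with hbot | hall
      · exact absurd (((inf_le_right : (H ⊔ (K ⊔ E)) ⊓ N ≤ N).trans hbot.le).trans bot_le) hMJ
      · exact hall _ _ hchief inf_le_right
    have hcent : quotCentralizer H K hKn =
        quotCentralizer ((H ⊔ (K ⊔ E)) ⊓ N) (((H ⊔ (K ⊔ E)) ⊓ N) ⊓ (K ⊔ E)) hchief.1 := by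
      ext g
      rw [mem_quotCentralizer, mem_quotCentralizer]
      have hstep : (∀ h ∈ H, g⁻¹ * h⁻¹ * g * h ∈ K) ↔
          (∀ x ∈ H ⊔ (K ⊔ E), g⁻¹ * x⁻¹ * g * x ∈ K ⊔ E) := by
        constructor
        · intro hg x hx
          rw [sup_comm H (K ⊔ E)] at hx
          obtain ⟨a, ha, b, hb, rfl⟩ := mem_sup_of_normal_left hJn hx
          exact com_mul_mem hJn (com_mem_of_mem_normal hJn g ha) (hKJ (hg b hb))
        · intro hg h hh
          rw [← hHJK]
          exact Subgroup.mem_inf.mpr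
            ⟨com_mem_of_mem_normal hHn g hh, hg h ((le_sup_left : H ≤ H ⊔ (K ⊔ E)) hh)⟩
      rw [hstep]
      constructor
      · intro hg m hm
        exact Subgroup.mem_inf.mpr
          ⟨com_mem_of_mem_normal hMn g hm, hg m ((inf_le_left : (H ⊔ (K ⊔ E)) ⊓ N ≤ _) hm)⟩
      · intro hg x hx
        rw [hPdec] at hx
        obtain ⟨a, ha, b, hb, rfl⟩ := mem_sup_of_normal_left hJn hx
        exact com_mul_mem hJn (com_mem_of_mem_normal hJn g ha)
          ((inf_le_right : ((H ⊔ (K ⊔ E)) ⊓ N) ⊓ (K ⊔ E) ≤ K ⊔ E) (hg b hb))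
    have hsub1 : K.subgroupOf H = (K ⊔ E).subgroupOf H := by
      ext x
      simp only [Subgroup.mem_subgroupOf]
      constructor
      · exact fun h => hKJ h
      · intro h
        rw [← hHJK]
        exact Subgroup.mem_inf.mpr ⟨x.2, h⟩
    have hsub2 : (((H ⊔ (K ⊔ E)) ⊓ N) ⊓ (K ⊔ E)).subgroupOf ((H ⊔ (K ⊔ E)) ⊓ N) =
        (K ⊔ E).subgroupOf ((H ⊔ (K ⊔ E)) ⊓ N) := by
      ext x
      simp only [Subgroup.mem_subgroupOf]
      constructor
      · exact fun h => (Subgroup.mem_inf.mp h).2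
      · exact fun h => Subgroup.mem_inf.mpr ⟨x.2, h⟩
    have hMsupJ : ((H ⊔ (K ⊔ E)) ⊓ N) ⊔ (K ⊔ E) = H ⊔ (K ⊔ E) := by
      rw [sup_comm]; exact hPdec.symm
    have hcard : Nat.card (H ⧸ K.subgroupOf H) =
        Nat.card ((↥((H ⊔ (K ⊔ E)) ⊓ N)) ⧸
          ((((H ⊔ (K ⊔ E)) ⊓ N) ⊓ (K ⊔ E)).subgroupOf ((H ⊔ (K ⊔ E)) ⊓ N))) := by
      have h1 : Nat.card ((↥H) ⧸ (K ⊔ E).subgroupOf H) =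
          Nat.card ((↥(H ⊔ (K ⊔ E))) ⧸ (K ⊔ E).subgroupOf (H ⊔ (K ⊔ E))) :=
        Nat.card_congr (QuotientGroup.quotientInfEquivProdNormalQuotient H (K ⊔ E)).toEquiv
      have h2 : Nat.card ((↥((H ⊔ (K ⊔ E)) ⊓ N)) ⧸ (K ⊔ E).subgroupOf ((H ⊔ (K ⊔ E)) ⊓ N)) =
          Nat.card ((↥(((H ⊔ (K ⊔ E)) ⊓ N) ⊔ (K ⊔ E))) ⧸
            (K ⊔ E).subgroupOf (((H ⊔ (K ⊔ E)) ⊓ N) ⊔ (K ⊔ E))) :=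
        Nat.card_congr
          (QuotientGroup.quotientInfEquivProdNormalQuotient ((H ⊔ (K ⊔ E)) ⊓ N) (K ⊔ E)).toEquiv
      rw [hMsupJ] at h2
      rw [hsub1, hsub2, h1, h2]
    exact isSigmaCentral_transfer hKn hchief.1 hcard hcent hSC

end SigmaAux

/-- Every chief factor of `G` below the `σ`-hypercentre `Z_σ(G)` is
`σ`-central in `G`. -/
theorem chiefFactor_below_sigmaHypercentre_sigmaCentral {I : Type*}
    (σ : I → Set ℕ) (hσ : IsPrimePartition σ) {G : Type*} [Group G] [Finite G] :
    ∀ H K : Subgroup G, (hc : IsChiefFactor H K) → H ≤ sigmaHypercentre σ G →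
      IsSigmaCentral σ H K hc.1 := by
  intro H K hc hle
  haveI : Finite (Subgroup G) :=
    Finite.of_injective (fun S : Subgroup G => (S : Set G)) SetLike.coe_injective
  have hbotT : IsSigmaHypercentral σ (⊥ : Subgroup G) := ⟨inferInstance, Or.inl rfl⟩
  have key : ∀ s : Set (Subgroup G), s.Finite →
      (∀ x ∈ s, IsSigmaHypercentral σ x) → IsSigmaHypercentral σ (sSup s) := by
    intro s hs
    refine Set.Finite.induction_on (motive := fun s _ =>
      (∀ x ∈ s, IsSigmaHypercentral σ x) → IsSigmaHypercentral σ (sSup s)) s hs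
      (fun _ => ?_) (fun {a t} hat htfin ih hsub => ?_)
    · rw [sSup_empty]; exact hbotT
    · rw [sSup_insert]
      exact sup_sigmaHypercentral (hsub a (Set.mem_insert _ _))
        (ih fun x hx => hsub x (Set.mem_insert_of_mem _ hx))
  have hZ : IsSigmaHypercentral σ (sigmaHypercentre σ G) :=
    key {E : Subgroup G | IsSigmaHypercentral σ E} (Set.toFinite _) (fun x hx => hx)
  rcases hZ.2 with hbot | hall
  · exfalso
    rw [hbot] at hle
    exact not_lt_bot (lt_of_lt_of_le hc.2.2.1 hle)
  · exact hall H K hc hle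
end
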